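/- arXiv:1508.06162 — 11 statements merged into one kernel-verified Lean document; each statement's English description precedes it below -/
import Mathlib

section
/- Consider a timed Petri net with free choice and priority routing and a discretization step δ > 0 such that every holding time τ_p is a positive integer multiple of δ. Then the families of pairs ((ρ_p,u_p))_{p∈P}, ((ρ_q,u_q))_{q∈Q} with all ρ_p, ρ_q ≥ 0 that solve the germ system (8a)–(8e) are exactly the affine germs of the stationary solutions of the δ-discretization of the fluid dynamics; precisely: (forward) if functions x_p, z_q : ℝ → ℝ satisfy the δ-discretized fluid equations for all sufficiently large t ∈ δℕ and there exist ρ_p, u_p, ρ_q, u_q ∈ ℝ with ρ_p, ρ_q ≥ 0 such that x_p(t) = u_p + ρ_p·t and z_q(t) = u_q + ρ_q·t for all sufficiently large t ∈ δℕ, then ((ρ_p,u_p), (ρ_q,u_q)) solves the germ system; (converse) if ((ρ_p,u_p), (ρ_q,u_q)) with all ρ_p, ρ_q ≥ 0 solves the germ system, then the step functions defined by x_p(t) = u_p + ρ_p·δ·⌊t/δ⌋ and z_q(t) = u_q + ρ_q·δ·⌊t/δ⌋ satisfy the δ-discretized fluid equations for all sufficiently large t. -/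
open scoped BigOperators

/-- A germ `(ρ, u)` viewed in the tropical semiring of germs `WithTop (ℝ ×ₗ ℝ)`
(lexicographically ordered pairs with a top element adjoined). -/
def germ (v : ℝ × ℝ) : WithTop (ℝ ×ₗ ℝ) := (toLex v : ℝ ×ₗ ℝ)


/-- A timed Petri net with free choice and priority routing (data part).
`inT p` (resp. `outT p`) is the set of input (resp. output) transitions of place `p`,
`τ` are the holding times, `M` the initial markings, `prio` the set of priority places
with distinguished output transitions `plus p` (priority) and `minus p`, and
`π q p` are the routing proportions at free choice places. -/
structure FCPNet where
  P : Type
  Q : Type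
  [finP : Fintype P]
  [finQ : Fintype Q]
  [decP : DecidableEq P]
  [decQ : DecidableEq Q]
  inT : P → Finset Q
  outT : P → Finset Q
  τ : P → ℝ
  M : P → ℕ
  prio : Finset P
  plus : P → Q
  minus : P → Q
  π : Q → P → ℝ

namespace FCPNet

attribute [instance] FCPNet.finP FCPNet.finQ FCPNet.decP FCPNet.decQ

variable (N : FCPNet)

/-- Upstream places `q^in` of a transition `q`. -/
def qIn (q : N.Q) : Finset N.P := Finset.univ.filter fun p => q ∈ N.outT p

/-- Free choice places with at least two output transitions (`P_conflict`). -/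
def conflict : Finset N.P :=
  Finset.univ.filter fun p => p ∉ N.prio ∧ 2 ≤ (N.outT p).card

/-- Transitions all of whose upstream places have a single output transition (`Q_sync`). -/
def sync : Finset N.Q :=
  Finset.univ.filter fun q => ∀ p ∈ N.qIn q, N.outT p = {q}

/-- Structural assumptions: positive holding times; every place is free choice or
priority; priority places have exactly two output transitions; every transition has at
most one upstream priority place; routing proportions at conflict places are positive
and sum to 1. -/
def WellFormed : Prop :=
  (∀ p, 0 < N.τ p) ∧
  (∀ p, p ∉ N.prio → ((N.outT p).card = 1 ∨ ∀ q ∈ N.outT p, N.qIn q = {p})) ∧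
  (∀ p ∈ N.prio, N.plus p ≠ N.minus p ∧ N.outT p = {N.plus p, N.minus p}) ∧
  (∀ q : N.Q, (N.qIn q ∩ N.prio).card ≤ 1) ∧
  (∀ p ∈ N.conflict, (∀ q ∈ N.outT p, 0 < N.π q p) ∧ ∑ q ∈ N.outT p, N.π q p = 1)

/-- The δ-discretized fluid equations (1)–(5) at time `t`, for counter functions
`x p` (places) and `z q` (transitions).  Minima over possibly empty sets of places
are taken in `WithTop ℝ`; an equation whose right-hand side is an empty minimum
(i.e. `⊤`) cannot hold. -/
def fluidEqns (x : N.P → ℝ → ℝ) (z : N.Q → ℝ → ℝ) (δ t : ℝ) : Prop :=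
  -- (1)
  (∀ p, x p t = N.M p + ∑ q ∈ N.inT p, z q t) ∧
  -- (2)
  (∀ p ∈ N.conflict, ∀ q ∈ N.outT p, z q t = N.π q p * x p (t - N.τ p)) ∧
  -- (3)
  (∀ q ∈ N.sync,
    ((z q t : WithTop ℝ)) = (N.qIn q).inf fun p => ((x p (t - N.τ p) : WithTop ℝ))) ∧
  -- (4)
  (∀ p ∈ N.prio,
    ((∃ k : ℕ, t = k * δ) →
      ((z (N.plus p) t : WithTop ℝ)) =
        min ((x p (t - N.τ p) - z (N.minus p) (t - δ) : ℝ) : WithTop ℝ)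
          (((N.qIn (N.plus p)).erase p).inf fun r => ((x r (t - N.τ r) : WithTop ℝ)))) ∧
    ((¬ ∃ k : ℕ, t = k * δ) →
      ((z (N.plus p) t : WithTop ℝ)) =
        min ((x p (t - N.τ p) - z (N.minus p) t : ℝ) : WithTop ℝ)
          (((N.qIn (N.plus p)).erase p).inf fun r => ((x r (t - N.τ r) : WithTop ℝ))))) ∧
  -- (5)
  (∀ p ∈ N.prio,
    ((z (N.minus p) t : WithTop ℝ)) =
      min ((x p (t - N.τ p) - z (N.plus p) t : ℝ) : WithTop ℝ)
        (((N.qIn (N.minus p)).erase p).inf fun r => ((x r (t - N.τ r) : WithTop ℝ))))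

/-- The germ system (8a)–(8e) on affine germs `gP p = (ρ_p, u_p)` and
`gQ q = (ρ_q, u_q)`.  Lexicographic minima over possibly empty sets of places are
taken in `WithTop (ℝ ×ₗ ℝ)`; an equation whose right-hand side is `⊤` cannot hold. -/
def germEqns (gP : N.P → ℝ × ℝ) (gQ : N.Q → ℝ × ℝ) : Prop :=
  -- (8a)
  (∀ p, gP p = ((0 : ℝ), (N.M p : ℝ)) + ∑ q ∈ N.inT p, gQ q) ∧
  -- (8b)
  (∀ p ∈ N.conflict, ∀ q ∈ N.outT p,
    gQ q = (N.π q p * (gP p).1, N.π q p * ((gP p).2 - (gP p).1 * N.τ p))) ∧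
  -- (8c)
  (∀ q ∈ N.sync,
    germ (gQ q) =
      (N.qIn q).inf fun p =>
        germ ((gP p).1, (gP p).2 - (gP p).1 * N.τ p)) ∧
  -- (8d)
  (∀ p ∈ N.prio,
    germ (gQ (N.minus p)) =
      min (germ ((gP p).1 - (gQ (N.plus p)).1,
              (gP p).2 - (gP p).1 * N.τ p - (gQ (N.plus p)).2))
        (((N.qIn (N.minus p)).erase p).inf fun r =>
          germ ((gP r).1, (gP r).2 - (gP r).1 * N.τ r))) ∧
  -- (8e)
  (∀ p ∈ N.prio,
    ((gQ (N.minus p)).1 = 0 →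
      germ (gQ (N.plus p)) =
        min (germ ((gP p).1 - (gQ (N.minus p)).1,
                (gP p).2 - (gP p).1 * N.τ p - (gQ (N.minus p)).2))
          (((N.qIn (N.plus p)).erase p).inf fun r =>
            germ ((gP r).1, (gP r).2 - (gP r).1 * N.τ r))) ∧
    (0 < (gQ (N.minus p)).1 →
      germ (gQ (N.plus p)) =
        ((N.qIn (N.plus p)).erase p).inf fun r =>
          germ ((gP r).1, (gP r).2 - (gP r).1 * N.τ r)))

end FCPNet


section Aux

open Filter

/-- Evaluation of an affine germ at time `s`. -/
def ev (v : ℝ × ℝ) (s : ℝ) : ℝ := v.2 + v.1 * s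

lemma lex_ev {a b : ℝ × ℝ} (h : (toLex a : ℝ ×ₗ ℝ) ≤ toLex b) :
    ∀ᶠ s in atTop, ev a s ≤ ev b s := by
  rcases Prod.Lex.toLex_le_toLex.1 h with h1 | ⟨h1, h2⟩
  · filter_upwards [eventually_ge_atTop ((a.2 - b.2) / (b.1 - a.1))] with s hs
    have hlt : 0 < b.1 - a.1 := by linarith
    rw [div_le_iff₀ hlt] at hs
    simp only [ev]; nlinarith
  · filter_upwards with s; simp only [ev, h1]; linarith

lemma affine_two {δ : ℝ} (hδ : 0 < δ) {w m : ℝ × ℝ}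
    (h : ∃ T : ℝ, ∀ k : ℕ, T ≤ k * δ → ev w (k * δ) = ev m (k * δ)) : w = m := by
  obtain ⟨T, hT⟩ := h
  set k0 : ℕ := ⌈T / δ⌉₊ with hk0
  have h0 : T ≤ k0 * δ := by
    have := Nat.le_ceil (T / δ)
    calc T = T / δ * δ := by field_simp
    _ ≤ k0 * δ := by apply mul_le_mul_of_nonneg_right this hδ.le
  have h1 : T ≤ (k0 + 1 : ℕ) * δ := le_trans h0 (by push_cast; nlinarith)
  have e0 := hT k0 h0
  have e1 := hT (k0 + 1) h1
  simp only [ev] at e0 e1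
  push_cast at e1
  have hfst : w.1 = m.1 := by
    have : w.1 * δ = m.1 * δ := by nlinarith
    exact mul_right_cancel₀ hδ.ne' this
  have hsnd : w.2 = m.2 := by nlinarith
  exact Prod.ext hfst hsnd

variable {ι : Type*}

lemma inf_attain (F : Finset ι) (hne : F.Nonempty) (g : ι → ℝ × ℝ) :
    ∃ i ∈ F, (F.inf fun i => germ (g i)) = germ (g i) ∧
      ∀ j ∈ F, (toLex (g i) : ℝ ×ₗ ℝ) ≤ toLex (g j) := by
  have h1 : F.inf (fun i => germ (g i)) = F.inf' hne (fun i => germ (g i)) :=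
    (Finset.inf'_eq_inf hne _).symm
  obtain ⟨i, hi, hival⟩ := Finset.exists_mem_eq_inf' hne (fun i => germ (g i))
  refine ⟨i, hi, by rw [h1, hival], fun j hj => ?_⟩
  have := Finset.inf_le (f := fun i => germ (g i)) hj
  rw [h1, hival] at this
  exact WithTop.coe_le_coe.mp this

lemma inf_ev_eventually (F : Finset ι) (hne : F.Nonempty) (g : ι → ℝ × ℝ) :
    ∃ i ∈ F, (F.inf fun i => germ (g i)) = germ (g i) ∧
      ∀ᶠ s in atTop,
        (F.inf fun j => ((ev (g j) s : ℝ) : WithTop ℝ)) = ((ev (g i) s : ℝ) : WithTop ℝ) := by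
  obtain ⟨i, hi, hval, hmin⟩ := inf_attain F hne g
  refine ⟨i, hi, hval, ?_⟩
  have : ∀ᶠ s in atTop, ∀ j ∈ F, ev (g i) s ≤ ev (g j) s := by
    rw [Filter.eventually_all_finset]
    exact fun j hj => lex_ev (hmin j hj)
  filter_upwards [this] with s hs
  refine le_antisymm (Finset.inf_le hi) (Finset.le_inf fun j hj => ?_)
  exact_mod_cast hs j hj

lemma key1 (F : Finset ι) (g : ι → ℝ × ℝ) (w : ℝ × ℝ) {δ : ℝ} (hδ : 0 < δ)
    (h : ∃ T : ℝ, ∀ k : ℕ, T ≤ k * δ →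
      ((ev w (k * δ) : ℝ) : WithTop ℝ) = F.inf fun i => ((ev (g i) (k * δ) : ℝ) : WithTop ℝ)) :
    germ w = F.inf fun i => germ (g i) := by
  obtain ⟨T, hT⟩ := h
  have hTk : ∀ T' : ℝ, ∃ k : ℕ, T' ≤ k * δ := by
    intro T'
    refine ⟨⌈T' / δ⌉₊, ?_⟩
    have := Nat.le_ceil (T' / δ)
    calc T' = T' / δ * δ := by field_simp
    _ ≤ _ := mul_le_mul_of_nonneg_right this hδ.le
  have hne : F.Nonempty := by
    by_contra hFe
    rw [Finset.not_nonempty_iff_eq_empty] at hFe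
    obtain ⟨k, hk⟩ := hTk T
    have := hT k hk
    rw [hFe] at this
    simp at this
  obtain ⟨i, hi, hval, hev⟩ := inf_ev_eventually F hne g
  rw [hval]
  rw [Filter.eventually_atTop] at hev
  obtain ⟨T', hT'⟩ := hev
  have : w = g i := by
    apply affine_two hδ (w := w) (m := g i)
    refine ⟨max T T', fun k hk => ?_⟩
    have h1 := hT k (le_trans (le_max_left _ _) hk)
    rw [hT' (k * δ) (le_trans (le_max_right _ _) hk)] at h1
    exact_mod_cast h1
  rw [this]

lemma key2 (F : Finset ι) (g : ι → ℝ × ℝ) (w : ℝ × ℝ)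
    (h : germ w = F.inf fun i => germ (g i)) :
    ∀ᶠ s in atTop,
      ((ev w s : ℝ) : WithTop ℝ) = F.inf fun i => ((ev (g i) s : ℝ) : WithTop ℝ) := by
  have hne : F.Nonempty := by
    by_contra hFe
    rw [Finset.not_nonempty_iff_eq_empty] at hFe
    rw [hFe] at h
    simp [germ] at h
  obtain ⟨i, hi, hval, hev⟩ := inf_ev_eventually F hne g
  rw [hval] at h
  have hwi : w = g i := by
    have := WithTop.coe_injective h
    exact toLex.injective this
  filter_upwards [hev] with s hs
  rw [hwi, hs]

lemma inf_insert_none' {α : Type*} [SemilatticeInf α] [OrderTop α] [DecidableEq ι]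
    (F : Finset ι) (f : Option ι → α) :
    (insert none (F.image some)).inf f = f none ⊓ F.inf fun i => f (some i) := by
  rw [Finset.inf_insert, Finset.inf_image]; rfl

lemma key1' [DecidableEq ι] (F : Finset ι) (g : ι → ℝ × ℝ) (a w : ℝ × ℝ) {δ : ℝ} (hδ : 0 < δ)
    (h : ∃ T : ℝ, ∀ k : ℕ, T ≤ k * δ →
      ((ev w (k * δ) : ℝ) : WithTop ℝ) =
        min ((ev a (k * δ) : ℝ) : WithTop ℝ)
          (F.inf fun i => ((ev (g i) (k * δ) : ℝ) : WithTop ℝ))) :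
    germ w = min (germ a) (F.inf fun i => germ (g i)) := by
  have := key1 (insert none (F.image some)) (fun o => o.elim a g) w hδ ?_
  · rw [inf_insert_none'] at this
    exact this
  · obtain ⟨T, hT⟩ := h
    refine ⟨T, fun k hk => ?_⟩
    rw [inf_insert_none']
    exact hT k hk

lemma key2' [DecidableEq ι] (F : Finset ι) (g : ι → ℝ × ℝ) (a w : ℝ × ℝ)
    (h : germ w = min (germ a) (F.inf fun i => germ (g i))) :
    ∀ᶠ s in atTop,
      ((ev w s : ℝ) : WithTop ℝ) =
        min ((ev a s : ℝ) : WithTop ℝ) (F.inf fun i => ((ev (g i) s : ℝ) : WithTop ℝ)) := by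
  have := key2 (insert none (F.image some)) (fun o => o.elim a g) w ?_
  · filter_upwards [this] with s hs
    rw [inf_insert_none'] at hs
    exact hs
  · rw [inf_insert_none']
    exact h

lemma floor_shift {δ : ℝ} (hδ : 0 < δ) (t : ℝ) (n : ℕ) :
    ⌊(t - n * δ) / δ⌋ = ⌊t / δ⌋ - n := by
  have h1 : (t - n * δ) / δ = t / δ - (n : ℤ) := by
    push_cast
    field_simp
  rw [h1, Int.floor_sub_intCast]

end Aux

/-- Theorem: stationary regimes and the germ system.
For a well-formed timed Petri net with free choice and priority routing whose holding
times are positive integer multiples of a step `δ > 0`: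
(forward) if counter functions satisfy the δ-discretized fluid equations for all
sufficiently large `t ∈ δℕ`, and coincide there with affine functions with
nonnegative slopes, then the corresponding germs solve the germ system (8a)–(8e);
(converse) if germs with nonnegative slopes solve the germ system, then the associated
step functions `t ↦ u + ρ·δ·⌊t/δ⌋` satisfy the δ-discretized fluid equations for all
sufficiently large real `t`. -/
theorem stationary_regimes_iff_germ_solutions
    (N : FCPNet) (hWF : N.WellFormed) (δ : ℝ) (hδ : 0 < δ)
    (hτδ : ∀ p, ∃ n : ℕ, 0 < n ∧ N.τ p = n * δ) :
    (∀ (x : N.P → ℝ → ℝ) (z : N.Q → ℝ → ℝ) (gP : N.P → ℝ × ℝ) (gQ : N.Q → ℝ × ℝ),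
      (∀ p, 0 ≤ (gP p).1) → (∀ q, 0 ≤ (gQ q).1) →
      (∃ T : ℝ, ∀ k : ℕ, T ≤ k * δ → N.fluidEqns x z δ (k * δ)) →
      (∃ T : ℝ, ∀ k : ℕ, T ≤ k * δ →
        (∀ p, x p (k * δ) = (gP p).2 + (gP p).1 * (k * δ)) ∧
        (∀ q, z q (k * δ) = (gQ q).2 + (gQ q).1 * (k * δ))) →
      N.germEqns gP gQ) ∧
    (∀ (gP : N.P → ℝ × ℝ) (gQ : N.Q → ℝ × ℝ),
      (∀ p, 0 ≤ (gP p).1) → (∀ q, 0 ≤ (gQ q).1) →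
      N.germEqns gP gQ →
      ∃ T : ℝ, ∀ t : ℝ, T ≤ t →
        N.fluidEqns (fun p s => (gP p).2 + (gP p).1 * (δ * (⌊s / δ⌋ : ℤ)))
          (fun q s => (gQ q).2 + (gQ q).1 * (δ * (⌊s / δ⌋ : ℤ))) δ t) := by
  constructor
  · rintro x z gP gQ hgP hgQ ⟨T1, hFl⟩ ⟨T2, hAf⟩
    have hτpos : ∀ p, 0 < N.τ p := hWF.1
    set S : ℝ := ∑ p : N.P, N.τ p with hSdef
    have hSnn : 0 ≤ S := Finset.sum_nonneg fun p _ => (hτpos p).le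
    have hτleS : ∀ p : N.P, N.τ p ≤ S := fun p =>
      Finset.single_le_sum (f := fun r => N.τ r) (fun r _ => (hτpos r).le) (Finset.mem_univ p)
    set T0 : ℝ := max T1 T2 with hT0def
    set T : ℝ := max T0 0 + S + δ with hTdef
    have hmax1 : T1 ≤ max T0 0 := le_trans (le_max_left T1 T2) (le_max_left T0 0)
    have hmax2 : T2 ≤ max T0 0 := le_trans (le_max_right T1 T2) (le_max_left T0 0)
    have hmax0 : (0:ℝ) ≤ max T0 0 := le_max_right T0 0
    have hTT1 : ∀ k : ℕ, T ≤ (k:ℝ) * δ → T1 ≤ (k:ℝ) * δ := fun k hk => by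
      rw [hTdef] at hk; linarith
    have hTT2 : ∀ k : ℕ, T ≤ (k:ℝ) * δ → T2 ≤ (k:ℝ) * δ := fun k hk => by
      rw [hTdef] at hk; linarith
    have hshiftτ : ∀ (p : N.P) (k : ℕ), T ≤ (k:ℝ) * δ →
        ∃ m : ℕ, (m:ℝ) * δ = (k:ℝ) * δ - N.τ p ∧ T0 ≤ (m:ℝ) * δ := by
      intro p k hk
      obtain ⟨n, hn, hτn⟩ := hτδ p
      have hτS := hτleS p
      rw [hTdef] at hk
      have hnk : n ≤ k := by
        have h1 : (n:ℝ) * δ ≤ (k:ℝ) * δ := by rw [← hτn]; linarith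
        exact_mod_cast le_of_mul_le_mul_right h1 hδ
      refine ⟨k - n, ?_, ?_⟩
      · rw [Nat.cast_sub hnk, hτn]; ring
      · rw [Nat.cast_sub hnk]
        have : ((k:ℝ) - n) * δ = (k:ℝ) * δ - N.τ p := by rw [hτn]; ring
        rw [this]
        have := le_max_left T0 (0:ℝ)
        linarith
    have hshiftδ : ∀ k : ℕ, T ≤ (k:ℝ) * δ →
        ∃ m : ℕ, (m:ℝ) * δ = (k:ℝ) * δ - δ ∧ T0 ≤ (m:ℝ) * δ := by
      intro k hk
      rw [hTdef] at hk
      have hk1 : 1 ≤ k := by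
        by_contra h
        push_neg at h
        have : k = 0 := by omega
        rw [this] at hk
        norm_num at hk
        linarith
      refine ⟨k - 1, ?_, ?_⟩
      · rw [Nat.cast_sub hk1]; push_cast; ring
      · rw [Nat.cast_sub hk1]
        have := le_max_left T0 (0:ℝ)
        push_cast
        nlinarith
    have hzev : ∀ (q : N.Q) (k : ℕ), T ≤ (k:ℝ) * δ →
        z q ((k:ℝ) * δ) = ev (gQ q) ((k:ℝ) * δ) := fun q k hk =>
      (hAf k (hTT2 k hk)).2 q
    have hxev0 : ∀ (p : N.P) (k : ℕ), T ≤ (k:ℝ) * δ →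
        x p ((k:ℝ) * δ) = ev (gP p) ((k:ℝ) * δ) := fun p k hk =>
      (hAf k (hTT2 k hk)).1 p
    have hxev : ∀ (p : N.P) (k : ℕ), T ≤ (k:ℝ) * δ →
        x p ((k:ℝ) * δ - N.τ p) =
          ev ((gP p).1, (gP p).2 - (gP p).1 * N.τ p) ((k:ℝ) * δ) := by
      intro p k hk
      obtain ⟨m, hm, hm0⟩ := hshiftτ p k hk
      have h2 : T2 ≤ (m:ℝ) * δ := le_trans (le_max_right T1 T2) hm0
      have hx := (hAf m h2).1 p
      rw [← hm, hx, hm]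
      simp only [ev]; ring
    have hzevδ : ∀ (q : N.Q) (k : ℕ), T ≤ (k:ℝ) * δ →
        z q ((k:ℝ) * δ - δ) =
          ev ((gQ q).1, (gQ q).2 - (gQ q).1 * δ) ((k:ℝ) * δ) := by
      intro q k hk
      obtain ⟨m, hm, hm0⟩ := hshiftδ k hk
      have h2 : T2 ≤ (m:ℝ) * δ := le_trans (le_max_right T1 T2) hm0
      have hz := (hAf m h2).2 q
      rw [← hm, hz, hm]
      simp only [ev]; ring
    have g8a : ∀ p, gP p = ((0:ℝ), (N.M p : ℝ)) + ∑ q ∈ N.inT p, gQ q := by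
      intro p
      apply affine_two hδ
      refine ⟨T, fun k hk => ?_⟩
      have h1 := (hFl k (hTT1 k hk)).1 p
      rw [hxev0 p k hk] at h1
      rw [Finset.sum_congr rfl (fun q _ => hzev q k hk)] at h1
      rw [h1]
      simp only [ev, Prod.snd_add, Prod.fst_add, Prod.fst_sum, Prod.snd_sum,
        Finset.sum_add_distrib, zero_add, Finset.sum_mul]
      ring
    have g8b : ∀ p ∈ N.conflict, ∀ q ∈ N.outT p,
        gQ q = (N.π q p * (gP p).1, N.π q p * ((gP p).2 - (gP p).1 * N.τ p)) := by
      intro p hp q hq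
      apply affine_two hδ
      refine ⟨T, fun k hk => ?_⟩
      have h1 := (hFl k (hTT1 k hk)).2.1 p hp q hq
      rw [hzev q k hk, hxev p k hk] at h1
      rw [h1]; simp only [ev]; ring
    have g8c : ∀ q ∈ N.sync,
        germ (gQ q) =
          (N.qIn q).inf fun p => germ ((gP p).1, (gP p).2 - (gP p).1 * N.τ p) := by
      intro q hq
      apply key1 (N.qIn q) (fun r => ((gP r).1, (gP r).2 - (gP r).1 * N.τ r)) (gQ q) hδ
      refine ⟨T, fun k hk => ?_⟩
      have h1 := (hFl k (hTT1 k hk)).2.2.1 q hq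
      rw [hzev q k hk] at h1
      have h2 : (N.qIn q).inf (fun r => ((x r ((k:ℝ) * δ - N.τ r) : ℝ) : WithTop ℝ)) =
          (N.qIn q).inf (fun r =>
            ((ev ((gP r).1, (gP r).2 - (gP r).1 * N.τ r) ((k:ℝ) * δ) : ℝ) : WithTop ℝ)) :=
        Finset.inf_congr rfl (fun r _ => by rw [hxev r k hk])
      rw [h2] at h1
      exact h1
    have g8d : ∀ p ∈ N.prio,
        germ (gQ (N.minus p)) =
          min (germ ((gP p).1 - (gQ (N.plus p)).1,
                (gP p).2 - (gP p).1 * N.τ p - (gQ (N.plus p)).2))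
            (((N.qIn (N.minus p)).erase p).inf fun r =>
              germ ((gP r).1, (gP r).2 - (gP r).1 * N.τ r)) := by
      intro p hp
      apply key1' ((N.qIn (N.minus p)).erase p)
        (fun r => ((gP r).1, (gP r).2 - (gP r).1 * N.τ r)) _ _ hδ
      refine ⟨T, fun k hk => ?_⟩
      have h1 := (hFl k (hTT1 k hk)).2.2.2.2 p hp
      have ha : x p ((k:ℝ) * δ - N.τ p) - z (N.plus p) ((k:ℝ) * δ) =
          ev ((gP p).1 - (gQ (N.plus p)).1,
            (gP p).2 - (gP p).1 * N.τ p - (gQ (N.plus p)).2) ((k:ℝ) * δ) := by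
        rw [hxev p k hk, hzev (N.plus p) k hk]; simp only [ev]; ring
      rw [hzev (N.minus p) k hk, ha] at h1
      have h2 : ((N.qIn (N.minus p)).erase p).inf
            (fun r => ((x r ((k:ℝ) * δ - N.τ r) : ℝ) : WithTop ℝ)) =
          ((N.qIn (N.minus p)).erase p).inf (fun r =>
            ((ev ((gP r).1, (gP r).2 - (gP r).1 * N.τ r) ((k:ℝ) * δ) : ℝ) : WithTop ℝ)) :=
        Finset.inf_congr rfl (fun r _ => by rw [hxev r k hk])
      rw [h2] at h1
      exact h1
    have g8e : ∀ p ∈ N.prio,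
        ((gQ (N.minus p)).1 = 0 →
          germ (gQ (N.plus p)) =
            min (germ ((gP p).1 - (gQ (N.minus p)).1,
                    (gP p).2 - (gP p).1 * N.τ p - (gQ (N.minus p)).2))
              (((N.qIn (N.plus p)).erase p).inf fun r =>
                germ ((gP r).1, (gP r).2 - (gP r).1 * N.τ r))) ∧
        (0 < (gQ (N.minus p)).1 →
          germ (gQ (N.plus p)) =
            ((N.qIn (N.plus p)).erase p).inf fun r =>
              germ ((gP r).1, (gP r).2 - (gP r).1 * N.τ r)) := by
      intro p hp
      have hb1 : germ (gQ (N.plus p)) =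
          min (germ ((gP p).1 - (gQ (N.minus p)).1,
                (gP p).2 - (gP p).1 * N.τ p - ((gQ (N.minus p)).2 - (gQ (N.minus p)).1 * δ)))
            (((N.qIn (N.plus p)).erase p).inf fun r =>
              germ ((gP r).1, (gP r).2 - (gP r).1 * N.τ r)) := by
        apply key1' ((N.qIn (N.plus p)).erase p)
          (fun r => ((gP r).1, (gP r).2 - (gP r).1 * N.τ r)) _ _ hδ
        refine ⟨T, fun k hk => ?_⟩
        have h1 := ((hFl k (hTT1 k hk)).2.2.2.1 p hp).1 ⟨k, rfl⟩
        have ha : x p ((k:ℝ) * δ - N.τ p) - z (N.minus p) ((k:ℝ) * δ - δ) =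
            ev ((gP p).1 - (gQ (N.minus p)).1,
              (gP p).2 - (gP p).1 * N.τ p - ((gQ (N.minus p)).2 - (gQ (N.minus p)).1 * δ))
              ((k:ℝ) * δ) := by
          rw [hxev p k hk, hzevδ (N.minus p) k hk]; simp only [ev]; ring
        rw [hzev (N.plus p) k hk, ha] at h1
        have h2 : ((N.qIn (N.plus p)).erase p).inf
              (fun r => ((x r ((k:ℝ) * δ - N.τ r) : ℝ) : WithTop ℝ)) =
            ((N.qIn (N.plus p)).erase p).inf (fun r =>
              ((ev ((gP r).1, (gP r).2 - (gP r).1 * N.τ r) ((k:ℝ) * δ) : ℝ) : WithTop ℝ)) :=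
          Finset.inf_congr rfl (fun r _ => by rw [hxev r k hk])
        rw [h2] at h1
        exact h1
      refine ⟨fun hρ0 => ?_, fun hρpos => ?_⟩
      · have hpair : ((gP p).1 - (gQ (N.minus p)).1,
            (gP p).2 - (gP p).1 * N.τ p - ((gQ (N.minus p)).2 - (gQ (N.minus p)).1 * δ)) =
            ((gP p).1 - (gQ (N.minus p)).1,
              (gP p).2 - (gP p).1 * N.τ p - (gQ (N.minus p)).2) := by
          rw [hρ0]; norm_num
        rw [hb1, hpair]
      · rcases min_cases (germ ((gP p).1 - (gQ (N.minus p)).1,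
            (gP p).2 - (gP p).1 * N.τ p - ((gQ (N.minus p)).2 - (gQ (N.minus p)).1 * δ)))
            (((N.qIn (N.plus p)).erase p).inf fun r =>
              germ ((gP r).1, (gP r).2 - (gP r).1 * N.τ r)) with ⟨hm1, hm2⟩ | ⟨hm1, hm2⟩
        · exfalso
          rw [hm1] at hb1
          have he : gQ (N.plus p) = ((gP p).1 - (gQ (N.minus p)).1,
              (gP p).2 - (gP p).1 * N.τ p - ((gQ (N.minus p)).2 - (gQ (N.minus p)).1 * δ)) :=
            toLex.injective (WithTop.coe_injective hb1)
          have hle : (toLex (gQ (N.minus p)) : ℝ ×ₗ ℝ) ≤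
              toLex ((gP p).1 - (gQ (N.plus p)).1,
                (gP p).2 - (gP p).1 * N.τ p - (gQ (N.plus p)).2) :=
            WithTop.coe_le_coe.mp ((g8d p hp).le.trans (min_le_left _ _))
          rw [Prod.Lex.toLex_le_toLex] at hle
          have h1f := congrArg Prod.fst he
          have h1s := congrArg Prod.snd he
          dsimp only at h1f h1s hle
          rcases hle with hlt | ⟨heq, hle2⟩
          · linarith
          · nlinarith [mul_pos hρpos hδ]
        · rw [hm1] at hb1
          exact hb1
    exact ⟨g8a, g8b, g8c, g8d, g8e⟩
  · rintro gP gQ hgP hgQ hG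
    obtain ⟨h8a, h8b, h8c, h8d, h8e⟩ := hG
    have E3 : ∀ q : N.Q, ∀ᶠ s in Filter.atTop, q ∈ N.sync →
        ((ev (gQ q) s : ℝ) : WithTop ℝ) =
          (N.qIn q).inf fun r =>
            ((ev ((gP r).1, (gP r).2 - (gP r).1 * N.τ r) s : ℝ) : WithTop ℝ) := by
      intro q
      by_cases hq : q ∈ N.sync
      · exact (key2 _ _ _ (h8c q hq)).mono fun s h _ => h
      · filter_upwards with s h; exact absurd h hq
    have E5 : ∀ p : N.P, ∀ᶠ s in Filter.atTop, p ∈ N.prio →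
        ((ev (gQ (N.minus p)) s : ℝ) : WithTop ℝ) =
          min ((ev ((gP p).1 - (gQ (N.plus p)).1,
                (gP p).2 - (gP p).1 * N.τ p - (gQ (N.plus p)).2) s : ℝ) : WithTop ℝ)
            (((N.qIn (N.minus p)).erase p).inf fun r =>
              ((ev ((gP r).1, (gP r).2 - (gP r).1 * N.τ r) s : ℝ) : WithTop ℝ)) := by
      intro p
      by_cases hp : p ∈ N.prio
      · exact (key2' _ _ _ _ (h8d p hp)).mono fun s h _ => h
      · filter_upwards with s h; exact absurd h hp
    have E4a : ∀ p : N.P, ∀ᶠ s in Filter.atTop, p ∈ N.prio →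
        ((ev (gQ (N.plus p)) s : ℝ) : WithTop ℝ) =
          min ((ev ((gP p).1 - (gQ (N.minus p)).1,
                (gP p).2 - (gP p).1 * N.τ p - ((gQ (N.minus p)).2 - (gQ (N.minus p)).1 * δ))
                s : ℝ) : WithTop ℝ)
            (((N.qIn (N.plus p)).erase p).inf fun r =>
              ((ev ((gP r).1, (gP r).2 - (gP r).1 * N.τ r) s : ℝ) : WithTop ℝ)) := by
      intro p
      by_cases hp : p ∈ N.prio
      swap
      · filter_upwards with s h; exact absurd h hp
      rcases eq_or_lt_of_le (hgQ (N.minus p)) with hρ0 | hρpos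
      · have hpair : ((gP p).1 - (gQ (N.minus p)).1,
            (gP p).2 - (gP p).1 * N.τ p - ((gQ (N.minus p)).2 - (gQ (N.minus p)).1 * δ)) =
            ((gP p).1 - (gQ (N.minus p)).1,
              (gP p).2 - (gP p).1 * N.τ p - (gQ (N.minus p)).2) := by
          rw [← hρ0]; norm_num
        rw [hpair]
        exact (key2' _ _ _ _ ((h8e p hp).1 hρ0.symm)).mono fun s h _ => h
      · have h := key2 _ _ _ ((h8e p hp).2 hρpos)
        have hled : (toLex (gQ (N.minus p)) : ℝ ×ₗ ℝ) ≤
            toLex ((gP p).1 - (gQ (N.plus p)).1,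
              (gP p).2 - (gP p).1 * N.τ p - (gQ (N.plus p)).2) :=
          WithTop.coe_le_coe.mp ((h8d p hp).le.trans (min_le_left _ _))
        have hle1 : (toLex (gQ (N.plus p)) : ℝ ×ₗ ℝ) ≤
            toLex ((gP p).1 - (gQ (N.minus p)).1,
              (gP p).2 - (gP p).1 * N.τ p - ((gQ (N.minus p)).2 - (gQ (N.minus p)).1 * δ)) := by
          rw [Prod.Lex.toLex_le_toLex] at hled ⊢
          dsimp only at hled ⊢
          have hδρ : 0 < (gQ (N.minus p)).1 * δ := mul_pos hρpos hδ
          rcases hled with h1 | ⟨h1, h2⟩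
          · left; linarith
          · right; constructor
            · linarith
            · linarith
        have hev1 := lex_ev hle1
        refine (h.and hev1).mono fun s hs _ => ?_
        obtain ⟨hs1, hs2⟩ := hs
        rw [← hs1, min_eq_right (by exact_mod_cast hs2)]
    have E4b : ∀ p : N.P, ∀ᶠ s in Filter.atTop, p ∈ N.prio →
        ((ev (gQ (N.plus p)) s : ℝ) : WithTop ℝ) =
          min ((ev ((gP p).1 - (gQ (N.minus p)).1,
                (gP p).2 - (gP p).1 * N.τ p - (gQ (N.minus p)).2) s : ℝ) : WithTop ℝ)
            (((N.qIn (N.plus p)).erase p).inf fun r =>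
              ((ev ((gP r).1, (gP r).2 - (gP r).1 * N.τ r) s : ℝ) : WithTop ℝ)) := by
      intro p
      by_cases hp : p ∈ N.prio
      swap
      · filter_upwards with s h; exact absurd h hp
      rcases eq_or_lt_of_le (hgQ (N.minus p)) with hρ0 | hρpos
      · exact (key2' _ _ _ _ ((h8e p hp).1 hρ0.symm)).mono fun s h _ => h
      · have h := key2 _ _ _ ((h8e p hp).2 hρpos)
        have hled : (toLex (gQ (N.minus p)) : ℝ ×ₗ ℝ) ≤
            toLex ((gP p).1 - (gQ (N.plus p)).1,
              (gP p).2 - (gP p).1 * N.τ p - (gQ (N.plus p)).2) :=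
          WithTop.coe_le_coe.mp ((h8d p hp).le.trans (min_le_left _ _))
        have hle1 : (toLex (gQ (N.plus p)) : ℝ ×ₗ ℝ) ≤
            toLex ((gP p).1 - (gQ (N.minus p)).1,
              (gP p).2 - (gP p).1 * N.τ p - (gQ (N.minus p)).2) := by
          rw [Prod.Lex.toLex_le_toLex] at hled ⊢
          dsimp only at hled ⊢
          rcases hled with h1 | ⟨h1, h2⟩
          · left; linarith
          · right; exact ⟨by linarith, by linarith⟩
        have hev1 := lex_ev hle1
        refine (h.and hev1).mono fun s hs _ => ?_
        obtain ⟨hs1, hs2⟩ := hs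
        rw [← hs1, min_eq_right (by exact_mod_cast hs2)]
    have big := (Filter.eventually_all.2 E3).and
      ((Filter.eventually_all.2 E5).and
        ((Filter.eventually_all.2 E4a).and (Filter.eventually_all.2 E4b)))
    rw [Filter.eventually_atTop] at big
    obtain ⟨T, hT⟩ := big
    refine ⟨T + δ, fun t ht => ?_⟩
    have hfl : T ≤ δ * ((⌊t / δ⌋ : ℤ) : ℝ) := by
      have h1 : t / δ - 1 < ((⌊t / δ⌋ : ℤ) : ℝ) := Int.sub_one_lt_floor _
      have h2 : δ * (t / δ - 1) < δ * ((⌊t / δ⌋ : ℤ) : ℝ) := by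
        exact mul_lt_mul_of_pos_left h1 hδ
      have h3 : δ * (t / δ - 1) = t - δ := by field_simp
      linarith
    obtain ⟨B3, B5, B4a, B4b⟩ := hT (δ * ((⌊t / δ⌋ : ℤ) : ℝ)) hfl
    have hxsh : ∀ p : N.P,
        (gP p).2 + (gP p).1 * (δ * ((⌊(t - N.τ p) / δ⌋ : ℤ) : ℝ)) =
          ev ((gP p).1, (gP p).2 - (gP p).1 * N.τ p) (δ * ((⌊t / δ⌋ : ℤ) : ℝ)) := by
      intro p
      obtain ⟨n, hn, hτn⟩ := hτδ p
      rw [hτn, floor_shift hδ t n]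
      push_cast
      simp only [ev]
      ring
    have hzsh : ∀ q : N.Q,
        (gQ q).2 + (gQ q).1 * (δ * ((⌊(t - δ) / δ⌋ : ℤ) : ℝ)) =
          ev ((gQ q).1, (gQ q).2 - (gQ q).1 * δ) (δ * ((⌊t / δ⌋ : ℤ) : ℝ)) := by
      intro q
      have h1 : t - δ = t - (1 : ℕ) * δ := by norm_num
      rw [h1, floor_shift hδ t 1]
      push_cast
      simp only [ev]
      ring
    refine ⟨?_, ?_, ?_, ?_, ?_⟩
    · -- (1)
      intro p
      dsimp only
      have hf := congrArg Prod.fst (h8a p)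
      have hs2 := congrArg Prod.snd (h8a p)
      simp only [Prod.fst_add, Prod.snd_add, Prod.fst_sum, Prod.snd_sum, zero_add] at hf hs2
      rw [hf, hs2, Finset.sum_add_distrib, Finset.sum_mul]
      ring_nf
      congr 1
      exact Finset.sum_congr rfl fun _ _ => by ring
    · -- (2)
      intro p hp q hq
      dsimp only
      have hb := h8b p hp q hq
      have hbf := congrArg Prod.fst hb
      have hbs := congrArg Prod.snd hb
      dsimp only at hbf hbs
      rw [hbf, hbs, hxsh p]
      simp only [ev]
      ring
    · -- (3)
      intro q hq
      dsimp only
      have B := B3 q hq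
      have h2 : (N.qIn q).inf (fun r =>
            (((gP r).2 + (gP r).1 * (δ * ((⌊(t - N.τ r) / δ⌋ : ℤ) : ℝ)) : ℝ) : WithTop ℝ)) =
          (N.qIn q).inf (fun r =>
            ((ev ((gP r).1, (gP r).2 - (gP r).1 * N.τ r)
              (δ * ((⌊t / δ⌋ : ℤ) : ℝ)) : ℝ) : WithTop ℝ)) :=
        Finset.inf_congr rfl (fun r _ => by rw [hxsh r])
      rw [h2]
      exact B
    · -- (4)
      intro p hp
      have h2 : ((N.qIn (N.plus p)).erase p).inf (fun r =>
            (((gP r).2 + (gP r).1 * (δ * ((⌊(t - N.τ r) / δ⌋ : ℤ) : ℝ)) : ℝ) : WithTop ℝ)) =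
          ((N.qIn (N.plus p)).erase p).inf (fun r =>
            ((ev ((gP r).1, (gP r).2 - (gP r).1 * N.τ r)
              (δ * ((⌊t / δ⌋ : ℤ) : ℝ)) : ℝ) : WithTop ℝ)) :=
        Finset.inf_congr rfl (fun r _ => by rw [hxsh r])
      constructor
      · intro _
        dsimp only
        have B := B4a p hp
        have ha : (gP p).2 + (gP p).1 * (δ * ((⌊(t - N.τ p) / δ⌋ : ℤ) : ℝ)) -
            ((gQ (N.minus p)).2 + (gQ (N.minus p)).1 * (δ * ((⌊(t - δ) / δ⌋ : ℤ) : ℝ))) =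
            ev ((gP p).1 - (gQ (N.minus p)).1,
              (gP p).2 - (gP p).1 * N.τ p - ((gQ (N.minus p)).2 - (gQ (N.minus p)).1 * δ))
              (δ * ((⌊t / δ⌋ : ℤ) : ℝ)) := by
          rw [hxsh p, hzsh (N.minus p)]
          simp only [ev]
          ring
        rw [ha, h2]
        exact B
      · intro _
        dsimp only
        have B := B4b p hp
        have ha : (gP p).2 + (gP p).1 * (δ * ((⌊(t - N.τ p) / δ⌋ : ℤ) : ℝ)) -
            ((gQ (N.minus p)).2 + (gQ (N.minus p)).1 * (δ * ((⌊t / δ⌋ : ℤ) : ℝ))) =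
            ev ((gP p).1 - (gQ (N.minus p)).1,
              (gP p).2 - (gP p).1 * N.τ p - (gQ (N.minus p)).2)
              (δ * ((⌊t / δ⌋ : ℤ) : ℝ)) := by
          rw [hxsh p]
          simp only [ev]
          ring
        rw [ha, h2]
        exact B
    · -- (5)
      intro p hp
      dsimp only
      have B := B5 p hp
      have h2 : ((N.qIn (N.minus p)).erase p).inf (fun r =>
            (((gP r).2 + (gP r).1 * (δ * ((⌊(t - N.τ r) / δ⌋ : ℤ) : ℝ)) : ℝ) : WithTop ℝ)) =
          ((N.qIn (N.minus p)).erase p).inf (fun r =>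
            ((ev ((gP r).1, (gP r).2 - (gP r).1 * N.τ r)
              (δ * ((⌊t / δ⌋ : ℤ) : ℝ)) : ℝ) : WithTop ℝ)) :=
        Finset.inf_congr rfl (fun r _ => by rw [hxsh r])
      have ha : (gP p).2 + (gP p).1 * (δ * ((⌊(t - N.τ p) / δ⌋ : ℤ) : ℝ)) -
          ((gQ (N.plus p)).2 + (gQ (N.plus p)).1 * (δ * ((⌊t / δ⌋ : ℤ) : ℝ))) =
          ev ((gP p).1 - (gQ (N.plus p)).1,
            (gP p).2 - (gP p).1 * N.τ p - (gQ (N.plus p)).2)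
            (δ * ((⌊t / δ⌋ : ℤ) : ℝ)) := by
        rw [hxsh p]
        simp only [ev]
        ring
      rw [ha, h2]
      exact B
end

section
/- Suppose z₁, z₅, z₆ : ℝ → ℝ satisfy the δ-discretized call-center equations for all sufficiently large t ∈ δℕ, and there exist ρ₁, u₁, ρ₅, u₅, ρ₆, u₆ ∈ ℝ with ρ₁, ρ₅, ρ₆ ≥ 0 such that z₁(t) = u₁ + ρ₁·t, z₅(t) = u₅ + ρ₅·t and z₆(t) = u₆ + ρ₆·t for all sufficiently large t ∈ δℕ. Then (ρ₁,u₁,ρ₅,u₅,ρ₆,u₆) is a germ solution of the call-center system. -/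
/-- Lexicographic order on `ℝ × ℝ`. -/
def lexLe (p q : ℝ × ℝ) : Prop := p.1 < q.1 ∨ (p.1 = q.1 ∧ p.2 ≤ q.2)

/-- Strict lexicographic order on `ℝ × ℝ`. -/
def lexLt (p q : ℝ × ℝ) : Prop := lexLe p q ∧ p ≠ q

/-- Lexicographic minimum on `ℝ × ℝ`. -/
noncomputable def lexMin (p q : ℝ × ℝ) : ℝ × ℝ :=
  if p.1 < q.1 ∨ (p.1 = q.1 ∧ p.2 ≤ q.2) then p else q

/-- Parameters of the emergency call center: routing proportions `pe, pu, pa`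
(for extremely urgent, urgent, and advice calls), holding times
`te, tu, ta, ttr, te', tu'`, and staffing levels `N1, N2`. -/
structure CCParams where
  pe : ℝ
  pu : ℝ
  pa : ℝ
  te : ℝ
  tu : ℝ
  ta : ℝ
  ttr : ℝ
  te' : ℝ
  tu' : ℝ
  N1 : ℝ
  N2 : ℝ
  hpe : 0 < pe
  hpu : 0 < pu
  hpa : 0 < pa
  hsum : pe + pu + pa = 1
  hte : 0 < te
  htu : 0 < tu
  hta : 0 < ta
  httr : 0 < ttr
  hte' : 0 < te'
  htu' : 0 < tu'
  hN1 : 0 < N1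
  hN2 : 0 < N2

/-- Average treatment time at level 1. -/
noncomputable def CCParams.tbar (P : CCParams) : ℝ :=
  P.pe * (P.te + P.ttr) + P.pu * P.tu + P.pa * P.ta

/-- First phase transition point. -/
noncomputable def CCParams.r1 (P : CCParams) : ℝ := P.pe * (P.ttr + P.te') / P.tbar

/-- Second phase transition point. -/
noncomputable def CCParams.r2 (P : CCParams) : ℝ :=
  (P.pe * (P.ttr + P.te') + P.pu * P.tu') / P.tbar

/-- A germ solution of the call-center system. -/
noncomputable def CCParams.GermSol (P : CCParams) (ρ1 u1 ρ5 u5 ρ6 u6 : ℝ) : Prop :=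
  0 ≤ ρ1 ∧ 0 ≤ ρ5 ∧ 0 ≤ ρ6 ∧
  -- (a)
  (ρ1, u1) = (ρ5 + P.pu * ρ1 + P.pa * ρ1,
    P.N1 + (u5 - ρ5 * P.ttr) + P.pu * (u1 - ρ1 * P.tu) + P.pa * (u1 - ρ1 * P.ta)) ∧
  -- (b), case ρ6 = 0
  (ρ6 = 0 → (ρ5, u5) = lexMin (ρ5, P.N2 + u5 - ρ5 * (P.ttr + P.te'))
      (P.pe * ρ1, P.pe * (u1 - ρ1 * P.te))) ∧
  -- (b), case ρ6 > 0
  (0 < ρ6 → (ρ5, u5) = (P.pe * ρ1, P.pe * (u1 - ρ1 * P.te))) ∧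
  -- (c)
  (ρ6, u6) = lexMin (ρ6, P.N2 - ρ5 * (P.ttr + P.te') + u6 - ρ6 * P.tu')
      (P.pu * ρ1, P.pu * (u1 - ρ1 * P.tu))

/-- The δ-discretized call-center equations at time `t`. -/
noncomputable def CCParams.Eqns (P : CCParams) (z1 z5 z6 : ℝ → ℝ) (δ t : ℝ) : Prop :=
  z1 t = P.N1 + z5 (t - P.ttr) + P.pu * z1 (t - P.tu) + P.pa * z1 (t - P.ta) ∧
  z5 t = min (P.N2 + z5 (t - P.ttr - P.te') + z6 (t - P.tu') - z6 (t - δ))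
      (P.pe * z1 (t - P.te)) ∧
  z6 t = min (P.N2 + z5 (t - P.ttr - P.te') + z6 (t - P.tu') - z5 t)
      (P.pu * z1 (t - P.tu))

lemma two_pt (δ ρ u b a t : ℝ) (hδ : δ ≠ 0)
    (h1 : u + ρ * t = a + b * t) (h2 : u + ρ * (t + δ) = a + b * (t + δ)) :
    ρ = b ∧ u = a := by
  have hb : ρ = b := by
    have h3 : ρ * δ = b * δ := by nlinarith [h1, h2]
    exact mul_right_cancel₀ hδ h3
  refine ⟨hb, ?_⟩
  have h4 : u + b * t = a + b * t := hb ▸ h1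
  linarith

lemma min_germ (δ : ℝ) (hδ : 0 < δ) (K : ℕ) (ρ u b1 a1 b2 a2 : ℝ)
    (h : ∀ k : ℕ, K ≤ k → u + ρ * ((k : ℝ) * δ) =
      min (a1 + b1 * ((k : ℝ) * δ)) (a2 + b2 * ((k : ℝ) * δ))) :
    (ρ, u) = lexMin (b1, a1) (b2, a2) := by
  rcases lt_trichotomy b1 b2 with hlt | heq | hgt
  · obtain ⟨n, hn⟩ := exists_nat_gt (max (K : ℝ) ((a1 - a2) / ((b2 - b1) * δ)))
    have hKn : K ≤ n := by exact_mod_cast ((le_max_left _ _).trans hn.le)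
    have hb : a1 - a2 < (n : ℝ) * ((b2 - b1) * δ) := by
      have := (le_max_right (K : ℝ) _).trans_lt hn
      exact (div_lt_iff₀ (mul_pos (sub_pos.2 hlt) hδ)).mp this
    have key : ∀ j : ℕ, n ≤ j → u + ρ * ((j : ℝ) * δ) = a1 + b1 * ((j : ℝ) * δ) := by
      intro j hj
      have hj' : (n : ℝ) ≤ j := Nat.cast_le.2 hj
      have hmm : (n : ℝ) * ((b2 - b1) * δ) ≤ (j : ℝ) * ((b2 - b1) * δ) :=
        mul_le_mul_of_nonneg_right hj' (mul_pos (sub_pos.2 hlt) hδ).le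
      have hle : a1 + b1 * ((j : ℝ) * δ) ≤ a2 + b2 * ((j : ℝ) * δ) := by nlinarith
      rw [h j (hKn.trans hj), min_eq_left hle]
    have h1 := key n le_rfl
    have h2 := key (n + 1) (Nat.le_succ n)
    have hc : ((n + 1 : ℕ) : ℝ) * δ = (n : ℝ) * δ + δ := by push_cast; ring
    rw [hc] at h2
    obtain ⟨hρ, hu⟩ := two_pt δ ρ u b1 a1 ((n : ℝ) * δ) hδ.ne' h1 h2
    have hm : lexMin (b1, a1) (b2, a2) = (b1, a1) := by
      rw [lexMin, if_pos]; exact Or.inl hlt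
    rw [hm, hρ, hu]
  · subst heq
    have rew : ∀ t : ℝ, min (a1 + b1 * t) (a2 + b1 * t) = min a1 a2 + b1 * t := fun t =>
      min_add_add_right a1 a2 (b1 * t)
    have h1 := h K le_rfl
    have h2 := h (K + 1) (Nat.le_succ K)
    rw [rew] at h1 h2
    have hc : ((K + 1 : ℕ) : ℝ) * δ = (K : ℝ) * δ + δ := by push_cast; ring
    rw [hc] at h2
    obtain ⟨hρ, hu⟩ := two_pt δ ρ u b1 (min a1 a2) ((K : ℝ) * δ) hδ.ne' h1 h2
    rcases le_or_gt a1 a2 with hle | hlt2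
    · have hm : lexMin (b1, a1) (b1, a2) = (b1, a1) := by
        rw [lexMin, if_pos]; exact Or.inr ⟨rfl, hle⟩
      rw [hm, hρ, hu, min_eq_left hle]
    · have hm : lexMin (b1, a1) (b1, a2) = (b1, a2) := by
        rw [lexMin, if_neg]
        rintro (h | ⟨-, h⟩)
        · exact lt_irrefl _ h
        · exact absurd h (not_le.2 hlt2)
      rw [hm, hρ, hu, min_eq_right hlt2.le]
  · obtain ⟨n, hn⟩ := exists_nat_gt (max (K : ℝ) ((a2 - a1) / ((b1 - b2) * δ)))
    have hKn : K ≤ n := by exact_mod_cast ((le_max_left _ _).trans hn.le)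
    have hb : a2 - a1 < (n : ℝ) * ((b1 - b2) * δ) := by
      have := (le_max_right (K : ℝ) _).trans_lt hn
      exact (div_lt_iff₀ (mul_pos (sub_pos.2 hgt) hδ)).mp this
    have key : ∀ j : ℕ, n ≤ j → u + ρ * ((j : ℝ) * δ) = a2 + b2 * ((j : ℝ) * δ) := by
      intro j hj
      have hj' : (n : ℝ) ≤ j := Nat.cast_le.2 hj
      have hmm : (n : ℝ) * ((b1 - b2) * δ) ≤ (j : ℝ) * ((b1 - b2) * δ) :=
        mul_le_mul_of_nonneg_right hj' (mul_pos (sub_pos.2 hgt) hδ).le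
      have hle : a2 + b2 * ((j : ℝ) * δ) ≤ a1 + b1 * ((j : ℝ) * δ) := by nlinarith
      rw [h j (hKn.trans hj), min_eq_right hle]
    have h1 := key n le_rfl
    have h2 := key (n + 1) (Nat.le_succ n)
    have hc : ((n + 1 : ℕ) : ℝ) * δ = (n : ℝ) * δ + δ := by push_cast; ring
    rw [hc] at h2
    obtain ⟨hρ, hu⟩ := two_pt δ ρ u b2 a2 ((n : ℝ) * δ) hδ.ne' h1 h2
    have hm : lexMin (b1, a1) (b2, a2) = (b2, a2) := by
      rw [lexMin, if_neg]
      rintro (h | ⟨h, -⟩)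
      · exact absurd h (not_lt.2 hgt.le)
      · exact absurd h hgt.ne'
    rw [hm, hρ, hu]

lemma shift_eval (z : ℝ → ℝ) (u ρ δ T : ℝ) (hδ : 0 < δ)
    (hg : ∀ k : ℕ, T ≤ (k : ℝ) * δ → z ((k : ℝ) * δ) = u + ρ * ((k : ℝ) * δ))
    (K0 : ℕ) (hK0 : T ≤ (K0 : ℝ) * δ) (k m : ℕ) (hk : K0 + m ≤ k)
    (τ : ℝ) (hτ : τ = (m : ℝ) * δ) :
    z ((k : ℝ) * δ - τ) = u + ρ * ((k : ℝ) * δ - τ) := by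
  have hmk : m ≤ k := le_trans (Nat.le_add_left _ _) hk
  have hc : ((k - m : ℕ) : ℝ) = (k : ℝ) - m := by
    push_cast [Nat.cast_sub hmk]; ring
  have ht : (k : ℝ) * δ - τ = ((k - m : ℕ) : ℝ) * δ := by rw [hτ, hc]; ring
  rw [ht]
  apply hg
  refine hK0.trans ?_
  have h1 : (K0 : ℝ) ≤ ((k - m : ℕ) : ℝ) := by
    exact_mod_cast Nat.le_sub_of_add_le hk
  nlinarith

set_option maxHeartbeats 1000000 in
/-- if `z₁, z₅, z₆` satisfy the δ-discretized call-center equations for all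
sufficiently large `t ∈ δℕ` and are affine with germs `(ρᵢ, uᵢ)` (with `ρᵢ ≥ 0`) on all
sufficiently large `t ∈ δℕ`, then `(ρ₁,u₁,ρ₅,u₅,ρ₆,u₆)` is a germ solution. -/
theorem germ_of_stationary_solution (P : CCParams) (δ : ℝ) (hδ : 0 < δ)
    (hmte : ∃ n : ℕ, 0 < n ∧ P.te = n * δ)
    (hmtu : ∃ n : ℕ, 0 < n ∧ P.tu = n * δ)
    (hmta : ∃ n : ℕ, 0 < n ∧ P.ta = n * δ)
    (hmttr : ∃ n : ℕ, 0 < n ∧ P.ttr = n * δ)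
    (hmte' : ∃ n : ℕ, 0 < n ∧ P.te' = n * δ)
    (hmtu' : ∃ n : ℕ, 0 < n ∧ P.tu' = n * δ)
    (z1 z5 z6 : ℝ → ℝ)
    (heqns : ∃ T : ℝ, ∀ k : ℕ, T ≤ k * δ → P.Eqns z1 z5 z6 δ (k * δ))
    (ρ1 u1 ρ5 u5 ρ6 u6 : ℝ)
    (hρ1 : 0 ≤ ρ1) (hρ5 : 0 ≤ ρ5) (hρ6 : 0 ≤ ρ6)
    (hgerm : ∃ T : ℝ, ∀ k : ℕ, T ≤ k * δ →
      z1 (k * δ) = u1 + ρ1 * (k * δ) ∧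
      z5 (k * δ) = u5 + ρ5 * (k * δ) ∧
      z6 (k * δ) = u6 + ρ6 * (k * δ)) :
    P.GermSol ρ1 u1 ρ5 u5 ρ6 u6 := by
  obtain ⟨me, hmepos, hte_eq⟩ := hmte
  obtain ⟨mu, hmupos, htu_eq⟩ := hmtu
  obtain ⟨ma, hmapos, hta_eq⟩ := hmta
  obtain ⟨mtr, hmtrpos, httr_eq⟩ := hmttr
  obtain ⟨me', hme'pos, hte'_eq⟩ := hmte'
  obtain ⟨mu', hmu'pos, htu'_eq⟩ := hmtu'
  obtain ⟨Te, he⟩ := heqns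
  obtain ⟨Tg, hg⟩ := hgerm
  obtain ⟨K0, hK0⟩ := exists_nat_ge (max Te Tg / δ)
  have hK0' : max Te Tg ≤ (K0 : ℝ) * δ := (div_le_iff₀ hδ).mp hK0
  have hTg : Tg ≤ (K0 : ℝ) * δ := le_trans (le_max_right _ _) hK0'
  have hTe : Te ≤ (K0 : ℝ) * δ := le_trans (le_max_left _ _) hK0'
  set M : ℕ := me + mu + ma + mtr + me' + mu' + 1 with hM
  set K : ℕ := K0 + M with hK
  have hmul : ∀ {a b : ℕ}, a ≤ b → (a : ℝ) * δ ≤ (b : ℝ) * δ := fun h =>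
    mul_le_mul_of_nonneg_right (Nat.cast_le.2 h) hδ.le
  have hg1 : ∀ k : ℕ, Tg ≤ (k : ℝ) * δ → z1 ((k : ℝ) * δ) = u1 + ρ1 * ((k : ℝ) * δ) :=
    fun k h => (hg k h).1
  have hg5 : ∀ k : ℕ, Tg ≤ (k : ℝ) * δ → z5 ((k : ℝ) * δ) = u5 + ρ5 * ((k : ℝ) * δ) :=
    fun k h => (hg k h).2.1
  have hg6 : ∀ k : ℕ, Tg ≤ (k : ℝ) * δ → z6 ((k : ℝ) * δ) = u6 + ρ6 * ((k : ℝ) * δ) :=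
    fun k h => (hg k h).2.2
  have hTek : ∀ k : ℕ, K ≤ k → Te ≤ (k : ℝ) * δ := fun k hk =>
    hTe.trans (hmul (by omega))
  have hTgk : ∀ k : ℕ, K ≤ k → Tg ≤ (k : ℝ) * δ := fun k hk =>
    hTg.trans (hmul (by omega))
  have E1 : ∀ k : ℕ, K ≤ k → u1 + ρ1 * ((k : ℝ) * δ) =
      (P.N1 + (u5 - ρ5 * P.ttr) + P.pu * (u1 - ρ1 * P.tu) + P.pa * (u1 - ρ1 * P.ta))
        + (ρ5 + P.pu * ρ1 + P.pa * ρ1) * ((k : ℝ) * δ) := by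
    intro k hk
    have heq := (he k (hTek k hk)).1
    have hA := shift_eval z5 u5 ρ5 δ Tg hδ hg5 K0 hTg k mtr (by omega) P.ttr httr_eq
    have hB := shift_eval z1 u1 ρ1 δ Tg hδ hg1 K0 hTg k mu (by omega) P.tu htu_eq
    have hC := shift_eval z1 u1 ρ1 δ Tg hδ hg1 K0 hTg k ma (by omega) P.ta hta_eq
    have h0 := hg1 k (hTgk k hk)
    rw [hA, hB, hC, h0] at heq
    linarith [heq]
  have E5 : ∀ k : ℕ, K ≤ k → u5 + ρ5 * ((k : ℝ) * δ) =
      min ((P.N2 + u5 - ρ5 * (P.ttr + P.te') + ρ6 * (δ - P.tu')) + ρ5 * ((k : ℝ) * δ))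
          ((P.pe * (u1 - ρ1 * P.te)) + (P.pe * ρ1) * ((k : ℝ) * δ)) := by
    intro k hk
    have heq := (he k (hTek k hk)).2.1
    rw [sub_sub] at heq
    have hA := shift_eval z5 u5 ρ5 δ Tg hδ hg5 K0 hTg k (mtr + me') (by omega)
      (P.ttr + P.te') (by push_cast; rw [httr_eq, hte'_eq]; ring)
    have hB := shift_eval z6 u6 ρ6 δ Tg hδ hg6 K0 hTg k mu' (by omega) P.tu' htu'_eq
    have hC := shift_eval z6 u6 ρ6 δ Tg hδ hg6 K0 hTg k 1 (by omega) δ (by norm_num)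
    have hD := shift_eval z1 u1 ρ1 δ Tg hδ hg1 K0 hTg k me (by omega) P.te hte_eq
    have h0 := hg5 k (hTgk k hk)
    rw [hA, hB, hC, hD, h0] at heq
    refine heq.trans ?_
    congr 1 <;> ring
  have E6 : ∀ k : ℕ, K ≤ k → u6 + ρ6 * ((k : ℝ) * δ) =
      min ((P.N2 - ρ5 * (P.ttr + P.te') + u6 - ρ6 * P.tu') + ρ6 * ((k : ℝ) * δ))
          ((P.pu * (u1 - ρ1 * P.tu)) + (P.pu * ρ1) * ((k : ℝ) * δ)) := by
    intro k hk
    have heq := (he k (hTek k hk)).2.2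
    rw [sub_sub] at heq
    have hA := shift_eval z5 u5 ρ5 δ Tg hδ hg5 K0 hTg k (mtr + me') (by omega)
      (P.ttr + P.te') (by push_cast; rw [httr_eq, hte'_eq]; ring)
    have hB := shift_eval z6 u6 ρ6 δ Tg hδ hg6 K0 hTg k mu' (by omega) P.tu' htu'_eq
    have hD := shift_eval z1 u1 ρ1 δ Tg hδ hg1 K0 hTg k mu (by omega) P.tu htu_eq
    have h0 := hg5 k (hTgk k hk)
    have h0' := hg6 k (hTgk k hk)
    rw [hA, hB, hD, h0, h0'] at heq
    refine heq.trans ?_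
    congr 1 <;> ring
  -- extract germ relations
  have hcK : ((K + 1 : ℕ) : ℝ) * δ = (K : ℝ) * δ + δ := by push_cast; ring
  have E1b := E1 (K + 1) (Nat.le_succ K)
  rw [hcK] at E1b
  obtain ⟨ha_slope, ha_int⟩ := two_pt δ ρ1 u1 _ _ ((K : ℝ) * δ) hδ.ne' (E1 K le_rfl) E1b
  have Hb := min_germ δ hδ K ρ5 u5 ρ5 (P.N2 + u5 - ρ5 * (P.ttr + P.te') + ρ6 * (δ - P.tu'))
    (P.pe * ρ1) (P.pe * (u1 - ρ1 * P.te)) E5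
  have Hc := min_germ δ hδ K ρ6 u6 ρ6 (P.N2 - ρ5 * (P.ttr + P.te') + u6 - ρ6 * P.tu')
    (P.pu * ρ1) (P.pu * (u1 - ρ1 * P.tu)) E6
  refine ⟨hρ1, hρ5, hρ6, ?_, ?_, ?_, Hc⟩
  · simp only [Prod.mk.injEq]
    constructor <;> linarith [ha_slope, ha_int]
  · intro h0
    subst h0
    have : P.N2 + u5 - ρ5 * (P.ttr + P.te') + 0 * (δ - P.tu')
        = P.N2 + u5 - ρ5 * (P.ttr + P.te') := by ring
    rw [this] at Hb
    exact Hb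
  · intro h6
    rw [lexMin] at Hb Hc
    simp only at Hb Hc
    split_ifs at Hc with hc
    · rw [Prod.mk.injEq] at Hc
      have key : P.N2 - ρ5 * (P.ttr + P.te') = ρ6 * P.tu' := by
        have := Hc.2; linarith
      split_ifs at Hb with hb
      · exfalso
        rw [Prod.mk.injEq] at Hb
        have hHb := Hb.2
        have hexp : ρ6 * (δ - P.tu') = ρ6 * δ - ρ6 * P.tu' := by ring
        linarith [mul_pos h6 hδ]
      · exact Hb
    · rw [Prod.mk.injEq] at Hc
      obtain ⟨h61, h62⟩ := Hc
      push_neg at hc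
      have key2 : 0 < P.N2 - ρ5 * (P.ttr + P.te') - ρ6 * P.tu' := by
        have := hc.2 h61
        linarith
      split_ifs at Hb with hb
      · exfalso
        rw [Prod.mk.injEq] at Hb
        have hHb := Hb.2
        have hexp : ρ6 * (δ - P.tu') = ρ6 * δ - ρ6 * P.tu' := by ring
        linarith [mul_pos h6 hδ]
      · exact Hb
end

section
/- Let (ρ₁,u₁,ρ₅,u₅,ρ₆,u₆) be a germ solution of the call-center system (so ρ₁, ρ₅, ρ₆ ≥ 0), and define z₁(t) = u₁ + ρ₁·t, z₅(t) = u₅ + ρ₅·t, z₆(t) = u₆ + ρ₆·t for t ∈ ℝ. Then z₁, z₅, z₆ satisfy the δ-discretized call-center equations for all sufficiently large t ∈ δℕ. -/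
private lemma aff_ge (a b c d : ℝ) (h : a < c ∨ (a = c ∧ b ≤ d)) :
    ∃ T : ℝ, ∀ t : ℝ, T ≤ t → a * t + b ≤ c * t + d := by
  rcases h with h | ⟨h1, h2⟩
  · refine ⟨(b - d) / (c - a), fun t ht => ?_⟩
    rw [div_le_iff₀ (by linarith)] at ht
    nlinarith
  · exact ⟨0, fun t _ => by rw [h1]; linarith⟩

/-- the affine functions associated with a germ solution of the call-center
system satisfy the δ-discretized call-center equations for all sufficiently large
`t ∈ δℕ`. -/
theorem stationary_solution_of_germ (P : CCParams) (δ : ℝ) (hδ : 0 < δ)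
    (hmte : ∃ n : ℕ, 0 < n ∧ P.te = n * δ)
    (hmtu : ∃ n : ℕ, 0 < n ∧ P.tu = n * δ)
    (hmta : ∃ n : ℕ, 0 < n ∧ P.ta = n * δ)
    (hmttr : ∃ n : ℕ, 0 < n ∧ P.ttr = n * δ)
    (hmte' : ∃ n : ℕ, 0 < n ∧ P.te' = n * δ)
    (hmtu' : ∃ n : ℕ, 0 < n ∧ P.tu' = n * δ)
    (ρ1 u1 ρ5 u5 ρ6 u6 : ℝ)
    (hsol : P.GermSol ρ1 u1 ρ5 u5 ρ6 u6) :
    ∃ T : ℝ, ∀ k : ℕ, T ≤ k * δ →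
      P.Eqns (fun t => u1 + ρ1 * t) (fun t => u5 + ρ5 * t) (fun t => u6 + ρ6 * t)
        δ (k * δ) := by
  obtain ⟨hρ1, hρ5, hρ6, ha, hb0, hbp, hc⟩ := hsol
  rw [Prod.mk.injEq] at ha
  obtain ⟨ha1, ha2⟩ := ha
  simp only [lexMin] at hc
  -- Analysis of equation (c)
  have hcres : (u6 = P.N2 - ρ5 * (P.ttr + P.te') + u6 - ρ6 * P.tu' ∧
        (ρ6 < P.pu * ρ1 ∨ (ρ6 = P.pu * ρ1 ∧
          P.N2 - ρ5 * (P.ttr + P.te') + u6 - ρ6 * P.tu' ≤ P.pu * (u1 - ρ1 * P.tu)))) ∨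
      (ρ6 = P.pu * ρ1 ∧ u6 = P.pu * (u1 - ρ1 * P.tu) ∧
        P.pu * (u1 - ρ1 * P.tu) < P.N2 - ρ5 * (P.ttr + P.te') + u6 - ρ6 * P.tu') := by
    split_ifs at hc with hcond
    · rw [Prod.mk.injEq] at hc
      exact Or.inl ⟨hc.2, hcond⟩
    · rw [Prod.mk.injEq] at hc
      push_neg at hcond
      exact Or.inr ⟨hc.1, hc.2, hcond.2 hc.1⟩
  have hnn : 0 ≤ P.N2 - ρ5 * (P.ttr + P.te') - ρ6 * P.tu' := by
    rcases hcres with ⟨h1, _⟩ | ⟨_, h2, h3⟩ <;> linarith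
  -- Equation 3 eventually
  have h6main : ∃ T : ℝ, ∀ t : ℝ, T ≤ t →
      u6 + ρ6 * t = min (P.N2 + (u5 + ρ5 * (t - P.ttr - P.te')) + (u6 + ρ6 * (t - P.tu'))
        - (u5 + ρ5 * t)) (P.pu * (u1 + ρ1 * (t - P.tu))) := by
    rcases hcres with ⟨h1, h2⟩ | ⟨h1, h2, h3⟩
    · have h2' : ρ6 < P.pu * ρ1 ∨ (ρ6 = P.pu * ρ1 ∧ u6 ≤ P.pu * (u1 - ρ1 * P.tu)) := by
        rcases h2 with h | ⟨he, hle⟩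
        · exact Or.inl h
        · exact Or.inr ⟨he, by linarith⟩
      obtain ⟨T, hT⟩ := aff_ge ρ6 u6 (P.pu * ρ1) (P.pu * (u1 - ρ1 * P.tu)) h2'
      refine ⟨T, fun t ht => ?_⟩
      rw [min_eq_left]
      · linarith
      · have := hT t ht
        nlinarith
    · refine ⟨0, fun t _ => ?_⟩
      rw [min_eq_right]
      · nlinarith
      · nlinarith
  -- Equation 2 eventually
  have h5main : ∃ T : ℝ, ∀ t : ℝ, T ≤ t →
      u5 + ρ5 * t = min (P.N2 + (u5 + ρ5 * (t - P.ttr - P.te')) + (u6 + ρ6 * (t - P.tu'))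
        - (u6 + ρ6 * (t - δ))) (P.pe * (u1 + ρ1 * (t - P.te))) := by
    rcases eq_or_lt_of_le hρ6 with h0 | hpos
    · subst h0
      have hb := hb0 rfl
      simp only [lexMin] at hb
      split_ifs at hb with hcond
      · rw [Prod.mk.injEq] at hb
        have h2' : ρ5 < P.pe * ρ1 ∨ (ρ5 = P.pe * ρ1 ∧ u5 ≤ P.pe * (u1 - ρ1 * P.te)) := by
          rcases hcond with h | ⟨he, hle⟩
          · exact Or.inl h
          · exact Or.inr ⟨he, by linarith [hb.2]⟩
        obtain ⟨T, hT⟩ := aff_ge ρ5 u5 (P.pe * ρ1) (P.pe * (u1 - ρ1 * P.te)) h2'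
        refine ⟨T, fun t ht => ?_⟩
        rw [min_eq_left]
        · have hu5 := hb.2
          nlinarith
        · have := hT t ht
          nlinarith
      · rw [Prod.mk.injEq] at hb
        push_neg at hcond
        have hlt := hcond.2 hb.1
        refine ⟨0, fun t _ => ?_⟩
        rw [min_eq_right]
        · nlinarith [hb.2]
        · nlinarith [hb.2]
    · have hb := hbp hpos
      rw [Prod.mk.injEq] at hb
      refine ⟨0, fun t _ => ?_⟩
      rw [min_eq_right]
      · nlinarith [hb.2]
      · nlinarith [hb.2, mul_pos hpos hδ]
  obtain ⟨T5, h5⟩ := h5main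
  obtain ⟨T6, h6⟩ := h6main
  refine ⟨max T5 T6, fun k hk => ?_⟩
  refine ⟨?_, ?_, ?_⟩
  · show u1 + ρ1 * (k * δ) = _
    push_cast
    linear_combination ha2 + (k * δ : ℝ) * ha1
  · exact h5 _ (le_trans (le_max_left _ _) hk)
  · exact h6 _ (le_trans (le_max_right _ _) hk)
end

section
/- Every germ solution of the call-center system satisfies ρ₅ = π_ext·ρ₁ and 0 ≤ ρ₆ ≤ π_ur·ρ₁. -/
/-- every germ solution satisfies `ρ₅ = π_ext·ρ₁` and `0 ≤ ρ₆ ≤ π_ur·ρ₁`. -/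
theorem germ_rho5_rho6 (P : CCParams) (ρ1 u1 ρ5 u5 ρ6 u6 : ℝ)
    (hsol : P.GermSol ρ1 u1 ρ5 u5 ρ6 u6) :
    ρ5 = P.pe * ρ1 ∧ 0 ≤ ρ6 ∧ ρ6 ≤ P.pu * ρ1 := by
  obtain ⟨h1, h5, h6, ha, hb0, hbp, hc⟩ := hsol
  have ha1 : ρ1 = ρ5 + P.pu * ρ1 + P.pa * ρ1 := congrArg Prod.fst ha
  have hsum := P.hsum
  refine ⟨by nlinarith, h6, ?_⟩
  have hc1 := congrArg Prod.fst hc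
  unfold lexMin at hc1
  split_ifs at hc1 with h
  · rcases h with h | h
    · exact le_of_lt h
    · exact le_of_eq h.1
  · simp at hc1; linarith [hc1]
end

section
/- Let (ρ₁,u₁,ρ₅,u₅,ρ₆,u₆) be a germ solution of the call-center system with ρ₁ > 0 and ρ₆ = 0. Then ρ₁ = N₂/(π_ext·(τ_tr + τ_ext')), ρ₅ = N₂/(τ_tr + τ_ext'), and N₂/N₁ ≤ r₁. -/
set_option maxHeartbeats 1000000 in
/-- in a germ solution with `ρ₁ > 0` and `ρ₆ = 0`, we have
`ρ₁ = N₂/(π_ext·(τ_tr + τ_ext'))`, `ρ₅ = N₂/(τ_tr + τ_ext')` and `N₂/N₁ ≤ r₁`. -/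
theorem germ_phase_low (P : CCParams) (ρ1 u1 ρ5 u5 ρ6 u6 : ℝ)
    (hsol : P.GermSol ρ1 u1 ρ5 u5 ρ6 u6) (hρ1 : 0 < ρ1) (hρ6 : ρ6 = 0) :
    ρ1 = P.N2 / (P.pe * (P.ttr + P.te')) ∧
    ρ5 = P.N2 / (P.ttr + P.te') ∧
    P.N2 / P.N1 ≤ P.r1 := by
  obtain ⟨h1, h5, h6, ha, hb0, hbp, hc⟩ := hsol
  have hpe := P.hpe; have hpu := P.hpu; have hpa := P.hpa; have hsum := P.hsum
  have hN1 := P.hN1; have hN2 := P.hN2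
  have httr := P.httr; have hte' := P.hte'; have hte := P.hte
  have htu := P.htu; have hta := P.hta
  rw [Prod.mk.injEq] at ha
  obtain ⟨ha1, ha2⟩ := ha
  have hρ5 : ρ5 = P.pe * ρ1 := by nlinarith
  -- from (c): N2 = ρ5 * (ttr + te')
  rw [hρ6] at hc
  simp only [lexMin] at hc
  have hN2key : ρ5 * (P.ttr + P.te') = P.N2 := by
    split_ifs at hc with h
    · rw [Prod.mk.injEq] at hc
      have := hc.2
      nlinarith
    · exfalso
      exact h (Or.inl (by positivity))
  have hsum15 : 0 < P.ttr + P.te' := by linarith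
  have hρ5v : ρ5 = P.N2 / (P.ttr + P.te') := by field_simp; linarith
  have hρ1v : ρ1 = P.N2 / (P.pe * (P.ttr + P.te')) := by
    rw [hρ5, mul_comm] at hN2key
    field_simp
    nlinarith
  refine ⟨hρ1v, hρ5v, ?_⟩
  -- from (b): u5 ≤ pe * (u1 - ρ1 * te)
  have hb := hb0 hρ6
  simp only [lexMin] at hb
  have hu5 : u5 ≤ P.pe * (u1 - ρ1 * P.te) := by
    split_ifs at hb with h
    · rcases h with h | h
      · exfalso; linarith
      · linarith [h.2]
    · rw [Prod.mk.injEq] at hb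
      linarith [hb.2]
  -- tbar positive
  have htbar : 0 < P.tbar := by
    unfold CCParams.tbar; positivity
  -- ρ1 * tbar ≤ N1
  have hkey : ρ1 * P.tbar ≤ P.N1 := by
    unfold CCParams.tbar
    have hsu : (P.pe + P.pu + P.pa) * u1 = u1 := by rw [hsum, one_mul]
    nlinarith [hsu]
  -- conclude
  unfold CCParams.r1
  rw [div_le_div_iff₀ hN1 htbar]
  have : ρ1 * (P.pe * (P.ttr + P.te')) = P.N2 := by
    rw [hρ1v]; field_simp
  nlinarith [mul_le_mul_of_nonneg_left hkey (by positivity : (0:ℝ) ≤ P.pe * (P.ttr + P.te')), this, htbar.le]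
end

section
/- Let (ρ₁,u₁,ρ₅,u₅,ρ₆,u₆) be a germ solution of the call-center system with ρ₆ > 0. Then ρ₁ = N₁/τ̄ and ρ₅ = π_ext·N₁/τ̄. -/
/-- in a germ solution with `ρ₆ > 0`, we have `ρ₁ = N₁/τ̄` and
`ρ₅ = π_ext·N₁/τ̄`. -/
theorem germ_rho6_pos (P : CCParams) (ρ1 u1 ρ5 u5 ρ6 u6 : ℝ)
    (hsol : P.GermSol ρ1 u1 ρ5 u5 ρ6 u6) (hρ6 : 0 < ρ6) :
    ρ1 = P.N1 / P.tbar ∧ ρ5 = P.pe * P.N1 / P.tbar := by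
  obtain ⟨h1, h5, h6, ha, _, hb, _⟩ := hsol
  have hb' := hb hρ6
  have htbar : 0 < P.tbar := by
    unfold CCParams.tbar
    have := P.hpe; have := P.hpu; have := P.hpa
    have := P.hte; have := P.htu; have := P.hta; have := P.httr
    positivity
  rw [Prod.mk.injEq] at ha hb'
  obtain ⟨ha1, ha2⟩ := ha
  obtain ⟨hb1, hb2⟩ := hb'
  have hsum := P.hsum
  have key : ρ1 * P.tbar = P.N1 := by
    unfold CCParams.tbar
    linear_combination ha2 + hb2 - P.ttr * hb1 + u1 * hsum
  have hρ1 : ρ1 = P.N1 / P.tbar := by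
    field_simp
    linarith [key]
  refine ⟨hρ1, ?_⟩
  rw [hb1, hρ1]; ring
end

section
/- Let (ρ₁,u₁,ρ₅,u₅,ρ₆,u₆) be a germ solution of the call-center system with ρ₆ > 0, and suppose the lexicographic minimum in equation (c) is attained by its first argument, i.e. (ρ₆, N₂ − ρ₅·(τ_tr + τ_ext') + u₆ − ρ₆·τ_ur') ≤lex (π_ur·ρ₁, π_ur·(u₁ − ρ₁·τ_ur)). Then ρ₆ = (N₂ − N₁·r₁)/τ_ur' and r₁ < N₂/N₁ ≤ r₂. -/
/-- in a germ solution with `ρ₆ > 0` in which the lexicographic minimum in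
equation (c) is attained by its first argument, we have `ρ₆ = (N₂ − N₁·r₁)/τ_ur'` and
`r₁ < N₂/N₁ ≤ r₂`. -/
theorem germ_phase_mid (P : CCParams) (ρ1 u1 ρ5 u5 ρ6 u6 : ℝ)
    (hsol : P.GermSol ρ1 u1 ρ5 u5 ρ6 u6) (hρ6 : 0 < ρ6)
    (hmin : lexLe (ρ6, P.N2 - ρ5 * (P.ttr + P.te') + u6 - ρ6 * P.tu')
      (P.pu * ρ1, P.pu * (u1 - ρ1 * P.tu))) :
    ρ6 = (P.N2 - P.N1 * P.r1) / P.tu' ∧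
    P.r1 < P.N2 / P.N1 ∧ P.N2 / P.N1 ≤ P.r2 := by
  obtain ⟨hρ1, hρ5, hρ60, ha, _, hb, hc⟩ := hsol
  obtain ⟨hb1, hb2⟩ := Prod.mk.injEq .. ▸ hb hρ6
  have ha1 : ρ1 = ρ5 + P.pu * ρ1 + P.pa * ρ1 := congrArg Prod.fst ha
  have ha2 : u1 = P.N1 + (u5 - ρ5 * P.ttr) + P.pu * (u1 - ρ1 * P.tu)
      + P.pa * (u1 - ρ1 * P.ta) := congrArg Prod.snd ha
  have hmin' : (ρ6 : ℝ) < P.pu * ρ1 ∨ ((ρ6 : ℝ) = P.pu * ρ1 ∧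
      P.N2 - ρ5 * (P.ttr + P.te') + u6 - ρ6 * P.tu' ≤ P.pu * (u1 - ρ1 * P.tu)) := hmin
  have hc' : (ρ6, u6) = (ρ6, P.N2 - ρ5 * (P.ttr + P.te') + u6 - ρ6 * P.tu') := by
    rw [hc]; unfold lexMin; exact if_pos hmin'
  have hc2 : u6 = P.N2 - ρ5 * (P.ttr + P.te') + u6 - ρ6 * P.tu' :=
    congrArg Prod.snd hc'
  have htbar : 0 < P.tbar := by
    have := P.hpe; have := P.hpu; have := P.hpa
    have := P.hte; have := P.htu; have := P.hta; have := P.httr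
    unfold CCParams.tbar; positivity
  have hsum := P.hsum
  -- ρ1 * tbar = N1
  have hρ1N : ρ1 * P.tbar = P.N1 := by
    unfold CCParams.tbar
    linear_combination ha2 + hb2 + u1 * hsum - P.ttr * hb1
  have hρ1pos : ρ1 = P.N1 / P.tbar := by
    rw [eq_div_iff (ne_of_gt htbar)]; exact hρ1N
  have hN1 := P.hN1
  have hN2 := P.hN2
  have htu' := P.htu'
  have hr1 : P.N1 * P.r1 = ρ5 * (P.ttr + P.te') := by
    rw [hb1, CCParams.r1, hρ1pos]
    field_simp
  have key : ρ6 * P.tu' = P.N2 - ρ5 * (P.ttr + P.te') := by linarith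
  have h1 : ρ6 = (P.N2 - P.N1 * P.r1) / P.tu' := by
    rw [hr1, eq_div_iff (ne_of_gt htu'), key]
  refine ⟨h1, ?_, ?_⟩
  · rw [lt_div_iff₀ hN1]
    nlinarith [key, hr1, mul_pos hρ6 htu']
  · have hρ6le : ρ6 ≤ P.pu * ρ1 := by
      rcases hmin' with h | ⟨h, _⟩
      · exact le_of_lt h
      · exact le_of_eq h
    have hr2 : P.r2 * P.N1 = ρ5 * (P.ttr + P.te') + P.pu * ρ1 * P.tu' := by
      rw [CCParams.r2, hb1, ← hρ1N]
      field_simp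
    rw [div_le_iff₀ hN1]
    nlinarith [key, hρ6le, htu']
end

section
/- Let (ρ₁,u₁,ρ₅,u₅,ρ₆,u₆) be a germ solution of the call-center system with ρ₆ > 0, and suppose the lexicographic minimum in equation (c) is attained by its second argument, i.e. (π_ur·ρ₁, π_ur·(u₁ − ρ₁·τ_ur)) ≤lex (ρ₆, N₂ − ρ₅·(τ_tr + τ_ext') + u₆ − ρ₆·τ_ur'). Then ρ₆ = π_ur·N₁/τ̄ and N₂/N₁ ≥ r₂; moreover, if this lexicographic inequality is strict, then N₂/N₁ > r₂. -/
/-- in a germ solution with `ρ₆ > 0` in which the lexicographic minimum in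
equation (c) is attained by its second argument, we have `ρ₆ = π_ur·N₁/τ̄` and
`N₂/N₁ ≥ r₂`; if the lexicographic inequality is strict, then `N₂/N₁ > r₂`. -/
theorem germ_phase_high (P : CCParams) (ρ1 u1 ρ5 u5 ρ6 u6 : ℝ)
    (hsol : P.GermSol ρ1 u1 ρ5 u5 ρ6 u6) (hρ6 : 0 < ρ6)
    (hmin : lexLe (P.pu * ρ1, P.pu * (u1 - ρ1 * P.tu))
      (ρ6, P.N2 - ρ5 * (P.ttr + P.te') + u6 - ρ6 * P.tu')) :
    (ρ6 = P.pu * P.N1 / P.tbar ∧ P.N2 / P.N1 ≥ P.r2) ∧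
    (lexLt (P.pu * ρ1, P.pu * (u1 - ρ1 * P.tu))
        (ρ6, P.N2 - ρ5 * (P.ttr + P.te') + u6 - ρ6 * P.tu') →
      P.N2 / P.N1 > P.r2) := by
  obtain ⟨hρ1nn, hρ5nn, hρ6nn, ha, hb0, hbp, hc⟩ := hsol
  have hb := hbp hρ6
  rw [Prod.mk.injEq] at ha hb
  obtain ⟨ha1, ha2⟩ := ha
  obtain ⟨hb1, hb2⟩ := hb
  have htbar : 0 < P.tbar := by
    have h1 := P.hpe; have h2 := P.hpu; have h3 := P.hpa
    have := P.hte; have := P.htu; have := P.hta; have := P.httr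
    unfold CCParams.tbar; nlinarith
  have hsum := P.hsum
  -- equation (c) analysis
  unfold lexMin at hc
  obtain ⟨hq6, hu6⟩ : ρ6 = P.pu * ρ1 ∧ u6 = P.pu * (u1 - ρ1 * P.tu) := by
    split_ifs at hc with h <;> rw [Prod.mk.injEq] at hc <;> dsimp only at h hc
    · rcases hmin with hlt | ⟨heq, hle⟩
      · dsimp only at hlt
        rcases h with h | ⟨h, _⟩ <;> linarith
      · dsimp only at heq hle
        rcases h with h | ⟨_, h2⟩
        · exact absurd h (by linarith)
        · exact ⟨heq.symm, by linarith [hc.2]⟩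
    · exact hc
  -- ρ1 = N1 / tbar
  rw [hb1, hb2] at ha2
  have hρ1 : ρ1 * P.tbar = P.N1 := by
    unfold CCParams.tbar; linear_combination ha2 + u1 * hsum
  have hρ6eq : ρ6 = P.pu * P.N1 / P.tbar := by
    rw [hq6, ← hρ1]; field_simp
  -- from hmin, second component inequality
  have hkey : P.pu * (u1 - ρ1 * P.tu) ≤ P.N2 - ρ5 * (P.ttr + P.te') + u6 - ρ6 * P.tu' := by
    rcases hmin with hlt | ⟨_, hle⟩
    · dsimp only at hlt; linarith [hq6]
    · exact hle
  have hN2 : ρ1 * (P.pe * (P.ttr + P.te') + P.pu * P.tu') ≤ P.N2 := by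
    rw [hu6, hq6, hb1] at hkey; nlinarith
  have hN1 := P.hN1
  have hmul := mul_le_mul_of_nonneg_right hN2 htbar.le
  have haux : (P.pe * (P.ttr + P.te') + P.pu * P.tu') * (ρ1 * P.tbar)
      = (P.pe * (P.ttr + P.te') + P.pu * P.tu') * P.N1 := by rw [hρ1]
  have hr2 : P.N2 / P.N1 ≥ P.r2 := by
    unfold CCParams.r2
    rw [ge_iff_le, div_le_div_iff₀ htbar hN1]
    nlinarith [hmul, haux]
  refine ⟨⟨hρ6eq, hr2⟩, ?_⟩
  rintro ⟨hle, hne⟩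
  have hkey' : P.pu * (u1 - ρ1 * P.tu) < P.N2 - ρ5 * (P.ttr + P.te') + u6 - ρ6 * P.tu' := by
    rcases lt_or_eq_of_le hkey with h' | h'
    · exact h'
    · exfalso; apply hne; rw [Prod.mk.injEq]; exact ⟨hq6.symm, h'⟩
  have hN2' : ρ1 * (P.pe * (P.ttr + P.te') + P.pu * P.tu') < P.N2 := by
    rw [hu6, hq6, hb1] at hkey'; nlinarith
  have hmul' := mul_lt_mul_of_pos_right hN2' htbar
  unfold CCParams.r2
  rw [gt_iff_lt, div_lt_div_iff₀ htbar hN1]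
  nlinarith [hmul', haux]
end

section
/- Suppose N₂/N₁ < r₁. Then every germ solution of the call-center system satisfies ρ₁ = N₂/(π_ext·(τ_tr + τ_ext')), ρ₅ = N₂/(τ_tr + τ_ext') and ρ₆ = 0. -/
/-- if `N₂/N₁ < r₁`, every germ solution satisfies
`ρ₁ = N₂/(π_ext·(τ_tr + τ_ext'))`, `ρ₅ = N₂/(τ_tr + τ_ext')` and `ρ₆ = 0`. -/
theorem throughput_phase_low (P : CCParams) (hphase : P.N2 / P.N1 < P.r1)
    (ρ1 u1 ρ5 u5 ρ6 u6 : ℝ) (hsol : P.GermSol ρ1 u1 ρ5 u5 ρ6 u6) :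
    ρ1 = P.N2 / (P.pe * (P.ttr + P.te')) ∧
    ρ5 = P.N2 / (P.ttr + P.te') ∧ ρ6 = 0 := by
  obtain ⟨h1, h5, h6, ha, hb0, hbp, hc⟩ := hsol
  have hpe := P.hpe; have hpu := P.hpu; have hpa := P.hpa
  have hte := P.hte; have htu := P.htu; have hta := P.hta
  have httr := P.httr; have hte' := P.hte'; have htu' := P.htu'
  have hN1 := P.hN1; have hN2 := P.hN2; have hsum := P.hsum
  have htbar : 0 < P.tbar := by
    unfold CCParams.tbar; positivity
  rw [Prod.mk.injEq] at ha
  obtain ⟨ha1, ha2⟩ := ha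
  have hρ5 : ρ5 = P.pe * ρ1 := by linear_combination -ha1 - ρ1 * hsum
  unfold CCParams.r1 at hphase
  rw [div_lt_div_iff₀ P.hN1 htbar] at hphase
  -- hphase : P.N2 * P.tbar < P.pe * (P.ttr + P.te') * P.N1
  rcases h6.eq_or_lt with h60 | h60
  · -- ρ6 = 0
    have hb := hb0 h60.symm
    unfold lexMin at hb
    split_ifs at hb with hcond
    · -- (b) picks first component: ρ5*(ttr+te') = N2
      rw [Prod.mk.injEq] at hb
      obtain ⟨-, hb2⟩ := hb
      have hkey : ρ5 * (P.ttr + P.te') = P.N2 := by linarith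
      have hpos : (0:ℝ) < P.ttr + P.te' := by linarith
      refine ⟨?_, ?_, h60.symm⟩
      · rw [eq_div_iff (by positivity)]
        linear_combination hkey - (P.ttr + P.te') * hρ5
      · rw [eq_div_iff (ne_of_gt hpos)]; exact hkey
    · -- (b) picks second: derive N1 = ρ1 * tbar, then contradiction via (c)
      exfalso
      rw [Prod.mk.injEq] at hb
      obtain ⟨-, hb2⟩ := hb
      have hN1eq : P.N1 = ρ1 * P.tbar := by
        unfold CCParams.tbar
        linear_combination -ha2 - hb2 - u1 * hsum + P.ttr * hρ5
      have heq : P.pe * (P.ttr + P.te') * P.N1 = ρ5 * (P.ttr + P.te') * P.tbar := by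
        linear_combination P.pe * (P.ttr + P.te') * hN1eq - P.tbar * (P.ttr + P.te') * hρ5
      unfold lexMin at hc
      split_ifs at hc with hcond2
      · rw [Prod.mk.injEq] at hc
        obtain ⟨-, hc2⟩ := hc
        have hN2eq : P.N2 = ρ5 * (P.ttr + P.te') := by
          rw [← h60] at hc2; linarith
        nlinarith [heq, hphase, hN2eq, htbar]
      · rw [Prod.mk.injEq] at hc
        obtain ⟨hc1, -⟩ := hc
        rw [← h60] at hc1
        have hρ1 : ρ1 = 0 :=
          (mul_eq_zero.mp hc1.symm).resolve_left (ne_of_gt hpu)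
        rw [hρ1] at hN1eq
        simp at hN1eq; linarith
  · -- 0 < ρ6
    exfalso
    have hb := hbp h60
    rw [Prod.mk.injEq] at hb
    obtain ⟨-, hb2⟩ := hb
    have hN1eq : P.N1 = ρ1 * P.tbar := by
      unfold CCParams.tbar
      linear_combination -ha2 - hb2 - u1 * hsum + P.ttr * hρ5
    have heq : P.pe * (P.ttr + P.te') * P.N1 = ρ5 * (P.ttr + P.te') * P.tbar := by
      linear_combination P.pe * (P.ttr + P.te') * hN1eq - P.tbar * (P.ttr + P.te') * hρ5
    have hposd : 0 < ρ6 * P.tu' := mul_pos h60 htu'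
    unfold lexMin at hc
    split_ifs at hc with hcond2
    · rw [Prod.mk.injEq] at hc
      obtain ⟨-, hc2⟩ := hc
      have hlt : ρ5 * (P.ttr + P.te') < P.N2 := by linarith
      have := mul_lt_mul_of_pos_right hlt htbar
      linarith
    · push_neg at hcond2
      rw [Prod.mk.injEq] at hc
      obtain ⟨hc1, hc2⟩ := hc
      obtain ⟨hge, himp⟩ := hcond2
      have hgt := himp hc1
      have hgt' : P.pu * (u1 - ρ1 * P.tu) <
          P.N2 - ρ5 * (P.ttr + P.te') + u6 - ρ6 * P.tu' := hgt
      have hlt : ρ5 * (P.ttr + P.te') < P.N2 := by linarith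
      have := mul_lt_mul_of_pos_right hlt htbar
      linarith
end

section
/- Suppose r₁ < N₂/N₁ < r₂. Then every germ solution of the call-center system satisfies ρ₁ = N₁/τ̄, ρ₅ = π_ext·N₁/τ̄ and ρ₆ = (N₂ − N₁·r₁)/τ_ur'. -/
/-- if `r₁ < N₂/N₁ < r₂`, every germ solution satisfies `ρ₁ = N₁/τ̄`,
`ρ₅ = π_ext·N₁/τ̄` and `ρ₆ = (N₂ − N₁·r₁)/τ_ur'`. -/
theorem throughput_phase_mid (P : CCParams)
    (hphase1 : P.r1 < P.N2 / P.N1) (hphase2 : P.N2 / P.N1 < P.r2)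
    (ρ1 u1 ρ5 u5 ρ6 u6 : ℝ) (hsol : P.GermSol ρ1 u1 ρ5 u5 ρ6 u6) :
    ρ1 = P.N1 / P.tbar ∧
    ρ5 = P.pe * P.N1 / P.tbar ∧
    ρ6 = (P.N2 - P.N1 * P.r1) / P.tu' := by

  obtain ⟨h1, h5, h6, ha, hb0, hbp, hc⟩ := hsol
  have hpe := P.hpe; have hpu := P.hpu; have hpa := P.hpa
  have hte := P.hte; have htu := P.htu; have hta := P.hta
  have httr := P.httr; have hte' := P.hte'; have htu' := P.htu'
  have hN1 := P.hN1; have hN2 := P.hN2; have hsum := P.hsum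
  have htbar : 0 < P.tbar := by
    unfold CCParams.tbar; nlinarith
  rw [Prod.mk.injEq] at ha
  obtain ⟨ha1, ha2⟩ := ha
  have h5e : ρ5 = P.pe * ρ1 := by linear_combination -ha1 - ρ1 * hsum
  rw [CCParams.r1, div_lt_div_iff₀ htbar P.hN1] at hphase1
  rw [CCParams.r2, div_lt_div_iff₀ P.hN1 htbar] at hphase2
  rcases eq_or_lt_of_le h6 with h60 | h6p
  · -- ρ6 = 0 : derive a contradiction
    exfalso
    have hb := hb0 h60.symm
    subst h60
    simp only [lexMin] at hc
    split_ifs at hc with hcond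
    · rw [Prod.mk.injEq] at hc
      have hN2eq : ρ5 * (P.ttr + P.te') = P.N2 := by linarith [hc.2]
      simp only [lexMin] at hb
      split_ifs at hb with hcond2
      · rw [Prod.mk.injEq] at hb
        rcases hcond2 with hlt | ⟨_, hle⟩
        · rw [h5e] at hlt; exact lt_irrefl _ hlt
        · -- u5 ≤ pe*u1 - pe*ρ1*te, combined with ha2 gives ρ1*tbar ≤ N1
          have hkey : P.pe * (u1 - ρ1 * P.te) - (P.N2 + u5 - ρ5 * (P.ttr + P.te'))
              = P.N1 - ρ1 * P.tbar := by
            unfold CCParams.tbar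
            linear_combination ha2 + u1 * hsum + hN2eq - P.ttr * h5e
          have hA : ρ1 * P.tbar ≤ P.N1 := by linarith [hle, hkey]
          have hprod : P.pe * (P.ttr + P.te') * (ρ1 * P.tbar)
              ≤ P.pe * (P.ttr + P.te') * P.N1 :=
            mul_le_mul_of_nonneg_left hA (by positivity)
          have hN2' : P.N2 * P.tbar = P.pe * ρ1 * (P.ttr + P.te') * P.tbar := by
            rw [← hN2eq, h5e]
          linarith [hprod, hN2', hphase1]
      · rw [Prod.mk.injEq] at hb
        push_neg at hcond2
        have := hcond2.2 h5e
        rw [hb.2] at this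
        linarith [hN2eq]
    · rw [Prod.mk.injEq] at hc
      have hρ10 : ρ1 = 0 := by
        have := hc.1
        nlinarith
      have hρ50 : ρ5 = 0 := by rw [h5e, hρ10]; ring
      simp only [lexMin] at hb
      split_ifs at hb with hcond2
      · rw [Prod.mk.injEq] at hb
        have := hb.2
        rw [hρ50] at this
        linarith
      · rw [Prod.mk.injEq] at hb
        have hu5 := hb.2
        -- u5 = pe*(u1 - ρ1*te), ρ1 = 0 so u5 = pe*u1, and pe*u1 = N1 + u5
        rw [hρ10, hρ50] at ha2
        have : P.pe * u1 = P.N1 + u5 := by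
          linear_combination ha2 + u1 * hsum
        rw [hρ10] at hu5
        simp at hu5
        linarith
  · -- ρ6 > 0
    have hb := hbp h6p
    rw [Prod.mk.injEq] at hb
    obtain ⟨hb5, hu5⟩ := hb
    have hρ1t : ρ1 * P.tbar = P.N1 := by
      unfold CCParams.tbar
      linear_combination ha2 + hu5 + u1 * hsum - P.ttr * h5e
    have hρ1 : ρ1 = P.N1 / P.tbar := by
      field_simp
      linarith [hρ1t]
    refine ⟨hρ1, ?_, ?_⟩
    · rw [h5e, hρ1]; ring
    · simp only [lexMin] at hc
      split_ifs at hc with hcond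
      · rw [Prod.mk.injEq] at hc
        have h6t : ρ6 * P.tu' = P.N2 - ρ5 * (P.ttr + P.te') := by linarith [hc.2]
        rw [CCParams.r1, eq_div_iff htu'.ne', h6t, h5e, ← hρ1t]
        field_simp
      · rw [Prod.mk.injEq] at hc
        exfalso
        push_neg at hcond
        have h6e : ρ6 = P.pu * ρ1 := hc.1
        have := hcond.2 h6e
        rw [hc.2] at this
        have hX : ρ5 * (P.ttr + P.te') + ρ6 * P.tu' < P.N2 := by linarith
        rw [h5e, h6e] at hX
        have hmul2 := mul_lt_mul_of_pos_right hX htbar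
        have hmul : (P.pe * (P.ttr + P.te') + P.pu * P.tu') * P.N1
            = (P.pe * (P.ttr + P.te') + P.pu * P.tu') * (ρ1 * P.tbar) := by
          rw [hρ1t]
        linarith [hmul2, hmul, hphase2]
end

section
/- Suppose N₂/N₁ > r₂. Then every germ solution of the call-center system satisfies ρ₁ = N₁/τ̄, ρ₅ = π_ext·N₁/τ̄ and ρ₆ = π_ur·N₁/τ̄. -/
/-- if `N₂/N₁ > r₂`, every germ solution satisfies `ρ₁ = N₁/τ̄`,
`ρ₅ = π_ext·N₁/τ̄` and `ρ₆ = π_ur·N₁/τ̄`. -/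
theorem throughput_phase_high (P : CCParams) (hphase : P.N2 / P.N1 > P.r2)
    (ρ1 u1 ρ5 u5 ρ6 u6 : ℝ) (hsol : P.GermSol ρ1 u1 ρ5 u5 ρ6 u6) :
    ρ1 = P.N1 / P.tbar ∧
    ρ5 = P.pe * P.N1 / P.tbar ∧
    ρ6 = P.pu * P.N1 / P.tbar := by
  obtain ⟨h1, h5, h6, ha, hb0, hbp, hc⟩ := hsol
  have htbar : 0 < P.tbar := by
    have := mul_pos P.hpe (add_pos P.hte P.httr)
    have := mul_pos P.hpu P.htu
    have := mul_pos P.hpa P.hta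
    unfold CCParams.tbar; linarith
  rw [Prod.mk.injEq] at ha
  obtain ⟨ha1, ha2⟩ := ha
  have hρ5 : ρ5 = P.pe * ρ1 := by linear_combination -ρ1 * P.hsum - ha1
  have hN2' : (P.pe * (P.ttr + P.te') + P.pu * P.tu') * P.N1 < P.N2 * P.tbar := by
    have h := (lt_div_iff₀ P.hN1).mp hphase
    rw [CCParams.r2, div_mul_eq_mul_div, div_lt_iff₀ htbar] at h
    exact h
  -- key: from u5 = pe*(u1 - ρ1*te) deduce ρ1*tbar = N1
  have key : u5 = P.pe * (u1 - ρ1 * P.te) → ρ1 * P.tbar = P.N1 := by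
    intro hb2
    rw [CCParams.tbar]
    linear_combination ha2 + hb2 + u1 * P.hsum - P.ttr * hρ5
  rcases eq_or_lt_of_le h6 with h60 | h6pos
  · -- case ρ6 = 0 : derive a contradiction
    exfalso
    have hb := hb0 h60.symm
    simp only [lexMin] at hb
    split_ifs at hb with hcond
    · -- branch: u5 = N2 + u5 - ρ5*(ttr+te')
      rw [Prod.mk.injEq] at hb
      have hb2 := hb.2
      have hNeq : P.N2 = ρ5 * (P.ttr + P.te') := by linarith
      rcases hcond with hlt | ⟨_, hle⟩
      · exact absurd hlt (by rw [hρ5]; exact lt_irrefl _)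
      · -- hle : N2 + u5 - ρ5*(ttr+te') ≤ pe*(u1 - ρ1*te)
        have hpeu1 : u1 - P.pu * u1 - P.pa * u1 = P.pe * u1 := by
          linear_combination -u1 * P.hsum
        have h5t : ρ5 * P.ttr = P.pe * ρ1 * P.ttr := by rw [hρ5]
        have hρ1le : ρ1 * P.tbar ≤ P.N1 := by
          rw [CCParams.tbar]
          nlinarith [ha2, hle, hNeq, hpeu1, h5t]
        have hN2tbar : P.N2 * P.tbar = P.pe * (P.ttr + P.te') * (ρ1 * P.tbar) := by
          rw [hNeq, hρ5]; ring
        have hmono : P.pe * (P.ttr + P.te') * (ρ1 * P.tbar)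
            ≤ P.pe * (P.ttr + P.te') * P.N1 :=
          mul_le_mul_of_nonneg_left hρ1le
            (le_of_lt (mul_pos P.hpe (add_pos P.httr P.hte')))
        nlinarith [mul_pos (mul_pos P.hpu P.htu') P.hN1]
    · rw [Prod.mk.injEq] at hb
      have hρ1 : ρ1 * P.tbar = P.N1 := key hb.2
      -- now use (c) with ρ6 = 0
      simp only [lexMin, ← h60] at hc
      split_ifs at hc with hcond2
      · rw [Prod.mk.injEq] at hc
        have hu6 := hc.2
        have hNeq : P.N2 = ρ5 * (P.ttr + P.te') := by linarith
        have hN2tbar : P.N2 * P.tbar = P.pe * (P.ttr + P.te') * P.N1 := by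
          rw [hNeq, hρ5, ← hρ1]; ring
        nlinarith [mul_pos (mul_pos P.hpu P.htu') P.hN1]
      · rw [Prod.mk.injEq] at hc
        have : (0:ℝ) = P.pu * ρ1 := hc.1
        have hρ1pos : 0 < ρ1 := by
          rcases lt_or_eq_of_le h1 with h | h
          · exact h
          · exfalso; rw [← h] at hρ1; simp at hρ1; linarith [P.hN1, hρ1]
        nlinarith [mul_pos P.hpu hρ1pos]
  · -- case ρ6 > 0
    have hb := hbp h6pos
    rw [Prod.mk.injEq] at hb
    have hρ1 : ρ1 * P.tbar = P.N1 := key hb.2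
    have hρ1eq : ρ1 = P.N1 / P.tbar := by field_simp; linarith
    have hρ5eq : ρ5 = P.pe * P.N1 / P.tbar := by
      rw [hρ5, hρ1eq]; ring
    refine ⟨hρ1eq, hρ5eq, ?_⟩
    simp only [lexMin] at hc
    split_ifs at hc with hcond
    · rw [Prod.mk.injEq] at hc
      have hu6 := hc.2
      have hNeq : P.N2 = ρ5 * (P.ttr + P.te') + ρ6 * P.tu' := by linarith
      -- show ρ6 = pu * ρ1, which suffices
      have h66 : ρ6 = P.pu * ρ1 := by
        rcases hcond with hlt | ⟨heq, _⟩
        · exfalso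
          have e1 : P.N2 * P.tbar
              = P.pe * (P.ttr + P.te') * P.N1 + ρ6 * P.tu' * P.tbar := by
            linear_combination P.tbar * hNeq + (P.ttr + P.te') * P.tbar * hρ5
              + P.pe * (P.ttr + P.te') * hρ1
          have e2 : ρ6 * P.tbar < P.pu * ρ1 * P.tbar :=
            mul_lt_mul_of_pos_right hlt htbar
          have e3 : ρ6 * P.tbar * P.tu' < P.pu * ρ1 * P.tbar * P.tu' :=
            mul_lt_mul_of_pos_right e2 P.htu'
          have e4 : P.pu * ρ1 * P.tbar * P.tu' = P.pu * P.N1 * P.tu' := by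
            linear_combination P.pu * P.tu' * hρ1
          nlinarith [hN2', e1, e3, e4]
        · exact heq
      rw [h66, hρ1eq]; ring
    · rw [Prod.mk.injEq] at hc
      rw [hc.1, hρ1eq]; ring
end
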